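/- arXiv:1403.7889 — 5 statements merged into one kernel-verified Lean document; each statement's English description precedes it below -/
import Mathlib

section
/- Let σ > 0 and Υ > 0, and for each n ≥ 1 and 1 ≤ j ≤ n set λ^n_j(σ) = σ²/n + 4Υ sin²[(π/2)·(2j−1)/(2n+1)]. Let (τ_n) be a sequence of real numbers converging to some τ ∈ (−1,0) ∪ (0,1). Then the sequence (1/(2n+1)) · Σ_{j=1}^n cos[πτ_n(2j−1)] / λ^n_j(σ) is bounded as n→∞. -/
open Real Filter

lemma cos_sum_eq (x : ℝ) (m : ℕ) :
    2 * Real.sin x * ∑ j ∈ Finset.Icc 1 m, Real.cos (x * (2 * (j:ℝ) - 1))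
      = Real.sin (2 * (m:ℝ) * x) := by
  induction m with
  | zero => simp
  | succ m ih =>
    rw [Finset.sum_Icc_succ_top (by omega : 1 ≤ m+1)]
    push_cast
    have h1 : Real.sin (2*((m:ℝ)+1)*x) = Real.sin (2*(m:ℝ)*x + 2*x) := by ring_nf
    have h2 : Real.cos (x*(2*((m:ℝ)+1) - 1)) = Real.cos (2*(m:ℝ)*x + x) := by ring_nf
    rw [h1, h2, Real.sin_add, Real.cos_add, Real.sin_two_mul, Real.cos_two_mul]
    have := Real.sin_sq_add_cos_sq x
    linear_combination ih - 2 * Real.sin (2*(m:ℝ)*x) * this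

lemma abel_bound (c a : ℕ → ℝ) (C : ℝ) (n : ℕ) (hn : 1 ≤ n)
    (hG : ∀ m, m ≤ n → |∑ j ∈ Finset.Icc 1 m, c j| ≤ C)
    (ha : ∀ j, 1 ≤ j → j < n → a (j+1) ≤ a j)
    (ha0 : 0 ≤ a n) :
    |∑ j ∈ Finset.Icc 1 n, c j * a j| ≤ C * a 1 := by
  have key : ∀ m, 1 ≤ m → m ≤ n →
      |∑ j ∈ Finset.Icc 1 m, c j * a j - (∑ j ∈ Finset.Icc 1 m, c j) * a m|
        ≤ C * (a 1 - a m) := by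
    intro m hm
    induction m, hm using Nat.le_induction with
    | base => intro _; simp
    | succ m hm ih =>
      intro hmn
      have ih' := ih (by omega)
      have step : a (m+1) ≤ a m := ha m hm (by omega)
      have hGm := hG m (by omega)
      rw [Finset.sum_Icc_succ_top (by omega : 1 ≤ m+1),
        Finset.sum_Icc_succ_top (by omega : 1 ≤ m+1)]
      have hre : ∑ j ∈ Finset.Icc 1 m, c j * a j + c (m+1) * a (m+1)
            - (∑ j ∈ Finset.Icc 1 m, c j + c (m+1)) * a (m+1)
          = (∑ j ∈ Finset.Icc 1 m, c j * a j - (∑ j ∈ Finset.Icc 1 m, c j) * a m)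
            + (∑ j ∈ Finset.Icc 1 m, c j) * (a m - a (m+1)) := by ring
      rw [hre]
      have h2 : |(∑ j ∈ Finset.Icc 1 m, c j) * (a m - a (m+1))| ≤ C * (a m - a (m+1)) := by
        rw [abs_mul, abs_of_nonneg (show (0:ℝ) ≤ a m - a (m+1) by linarith)]
        exact mul_le_mul_of_nonneg_right hGm (by linarith)
      calc _ ≤ |∑ j ∈ Finset.Icc 1 m, c j * a j - (∑ j ∈ Finset.Icc 1 m, c j) * a m|
            + |(∑ j ∈ Finset.Icc 1 m, c j) * (a m - a (m+1))| := abs_add_le _ _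
        _ ≤ C * (a 1 - a m) + C * (a m - a (m+1)) := add_le_add ih' h2
        _ = C * (a 1 - a (m+1)) := by ring
  have hk := key n hn le_rfl
  have hGn := hG n le_rfl
  have h2 : |(∑ j ∈ Finset.Icc 1 n, c j) * a n| ≤ C * a n := by
    rw [abs_mul, abs_of_nonneg ha0]
    exact mul_le_mul_of_nonneg_right hGn ha0
  calc |∑ j ∈ Finset.Icc 1 n, c j * a j|
      = |(∑ j ∈ Finset.Icc 1 n, c j * a j - (∑ j ∈ Finset.Icc 1 n, c j) * a n)
          + (∑ j ∈ Finset.Icc 1 n, c j) * a n| := by congr 1; ring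
    _ ≤ _ + _ := abs_add_le _ _
    _ ≤ C * (a 1 - a n) + C * a n := add_le_add hk h2
    _ = C * a 1 := by ring

noncomputable def lamf (σ Υ : ℝ) (n j : ℕ) : ℝ :=
  σ ^ 2 / (n : ℝ) + 4 * Υ * Real.sin (π / 2 * ((2 * (j : ℝ) - 1) / (2 * (n : ℝ) + 1))) ^ 2

lemma lamf_lb (σ Υ : ℝ) (hΥ : 0 < Υ) (n j : ℕ) : σ^2/(n:ℝ) ≤ lamf σ Υ n j :=
  le_add_of_nonneg_right (by positivity)

lemma lamf_pos (σ Υ : ℝ) (hσ : 0 < σ) (hΥ : 0 < Υ) (n : ℕ) (hn : 1 ≤ n) (j : ℕ) :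
    0 < lamf σ Υ n j := by
  have hn0 : (0:ℝ) < n := by exact_mod_cast hn
  exact lt_of_lt_of_le (by positivity) (lamf_lb σ Υ hΥ n j)

lemma lamf_inv_le (σ Υ : ℝ) (hσ : 0 < σ) (hΥ : 0 < Υ) (n : ℕ) (hn : 1 ≤ n) (j : ℕ) :
    (lamf σ Υ n j)⁻¹ ≤ (n:ℝ)/σ^2 := by
  have hn0 : (0:ℝ) < n := by exact_mod_cast hn
  have h := inv_anti₀ (by positivity : (0:ℝ) < σ^2/(n:ℝ)) (lamf_lb σ Υ hΥ n j)
  rwa [inv_div] at h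

lemma lamf_mono (σ Υ : ℝ) (hσ : 0 < σ) (hΥ : 0 < Υ) (n : ℕ) (hn : 1 ≤ n)
    (j : ℕ) (hj : 1 ≤ j) (hjn : j < n) : lamf σ Υ n j ≤ lamf σ Υ n (j+1) := by
  have hn0 : (0:ℝ) < n := by exact_mod_cast hn
  have hj1 : (1:ℝ) ≤ (j:ℝ) := by exact_mod_cast hj
  have hjn1 : (j:ℝ) + 1 ≤ (n:ℝ) := by exact_mod_cast hjn
  have hden : (0:ℝ) < 2*(n:ℝ)+1 := by linarith
  have hratio0 : (0:ℝ) ≤ (2*(j:ℝ)-1)/(2*(n:ℝ)+1) := div_nonneg (by linarith) (by linarith)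
  have hθ0 : (0:ℝ) ≤ π/2 * ((2*(j:ℝ)-1)/(2*(n:ℝ)+1)) := by positivity
  have hratio : (2*(j:ℝ)-1)/(2*(n:ℝ)+1) ≤ (2*((j:ℝ)+1)-1)/(2*(n:ℝ)+1) :=
    (div_le_div_iff_of_pos_right hden).mpr (by linarith)
  have hθle : π/2 * ((2*(j:ℝ)-1)/(2*(n:ℝ)+1)) ≤ π/2 * ((2*((j:ℝ)+1)-1)/(2*(n:ℝ)+1)) :=
    mul_le_mul_of_nonneg_left hratio (le_of_lt (by positivity))
  have hratio1 : (2*((j:ℝ)+1)-1)/(2*(n:ℝ)+1) ≤ 1 := by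
    rw [div_le_one hden]; linarith
  have hθ2 : π/2 * ((2*((j:ℝ)+1)-1)/(2*(n:ℝ)+1)) ≤ π/2 :=
    mul_le_of_le_one_right (le_of_lt (by positivity)) hratio1
  have hs1 : Real.sin (π/2 * ((2*(j:ℝ)-1)/(2*(n:ℝ)+1)))
      ≤ Real.sin (π/2 * ((2*((j:ℝ)+1)-1)/(2*(n:ℝ)+1))) := by
    apply Real.strictMonoOn_sin.monotoneOn _ _ hθle
    · exact ⟨by linarith [pi_pos], by linarith⟩
    · exact ⟨by nlinarith [pi_pos], hθ2⟩
  have hsn : 0 ≤ Real.sin (π/2 * ((2*(j:ℝ)-1)/(2*(n:ℝ)+1))) :=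
    Real.sin_nonneg_of_nonneg_of_le_pi hθ0 (by nlinarith [pi_pos])
  have hsq := pow_le_pow_left₀ hsn hs1 2
  have h4 : (0:ℝ) ≤ 4*Υ := by linarith
  unfold lamf
  push_cast
  nlinarith [mul_le_mul_of_nonneg_left hsq h4]

/-- Riemann–Lebesgue type bound: with `λ^n_j(σ) = σ²/n + 4Υ sin²[(π/2)(2j-1)/(2n+1)]`
and `τ_n → τ ∈ (-1,0) ∪ (0,1)`, the sequence
`(1/(2n+1)) Σ_{j=1}^n cos[πτ_n(2j-1)] / λ^n_j(σ)` is bounded as `n → ∞`. -/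
theorem stmt3 (σ Υ : ℝ) (hσ : 0 < σ) (hΥ : 0 < Υ)
    (τseq : ℕ → ℝ) (τ : ℝ) (hτ : Tendsto τseq atTop (nhds τ))
    (hτmem : τ ∈ Set.Ioo (-1 : ℝ) 0 ∪ Set.Ioo (0 : ℝ) 1) :
    ∃ M : ℝ, ∀ n : ℕ, 1 ≤ n →
      |(1 / (2 * (n : ℝ) + 1)) * ∑ j ∈ Finset.Icc 1 n,
          Real.cos (π * τseq n * (2 * (j : ℝ) - 1)) /
            (σ ^ 2 / (n : ℝ)
              + 4 * Υ * Real.sin (π / 2 * ((2 * (j : ℝ) - 1) / (2 * (n : ℝ) + 1))) ^ 2)|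
        ≤ M := by
  have hδ0 : 0 < |Real.sin (π * τ)| := by
    rcases hτmem with h | h
    · obtain ⟨h1, h2⟩ := h
      have hp : 0 < Real.sin (π * (-τ)) :=
        Real.sin_pos_of_pos_of_lt_pi (by nlinarith [pi_pos]) (by nlinarith [pi_pos])
      have heq : Real.sin (π * (-τ)) = - Real.sin (π * τ) := by
        rw [show π * (-τ) = -(π * τ) by ring, Real.sin_neg]
      rw [abs_pos]; intro hc; rw [hc] at heq; simp [heq] at hp; linarith
    · obtain ⟨h1, h2⟩ := h
      have hp : 0 < Real.sin (π * τ) :=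
        Real.sin_pos_of_pos_of_lt_pi (by nlinarith [pi_pos]) (by nlinarith [pi_pos])
      rw [abs_of_pos hp]; exact hp
  set δ : ℝ := |Real.sin (π * τ)| / 2 with hδdef
  have hδ : 0 < δ := by positivity
  have hcont : Continuous fun t : ℝ => |Real.sin (π * t)| := by fun_prop
  have htend : Tendsto (fun n => |Real.sin (π * τseq n)|) atTop (nhds |Real.sin (π * τ)|) :=
    (hcont.tendsto τ).comp hτ
  have hev : ∀ᶠ n in atTop, δ ≤ |Real.sin (π * τseq n)| :=
    htend.eventually (eventually_ge_nhds (by rw [hδdef]; linarith))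
  obtain ⟨N, hN⟩ := eventually_atTop.mp hev
  refine ⟨(N:ℝ)/(2*σ^2) + 1/(4*δ*σ^2), ?_⟩
  intro n hn
  have hn0 : (0:ℝ) < n := by exact_mod_cast hn
  have hσ2 : (0:ℝ) < σ^2 := by positivity
  have hgoal_eq : (∑ j ∈ Finset.Icc 1 n,
      Real.cos (π * τseq n * (2 * (j : ℝ) - 1)) /
        (σ ^ 2 / (n : ℝ)
          + 4 * Υ * Real.sin (π / 2 * ((2 * (j : ℝ) - 1) / (2 * (n : ℝ) + 1))) ^ 2))
      = ∑ j ∈ Finset.Icc 1 n,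
          Real.cos (π * τseq n * (2 * (j : ℝ) - 1)) / lamf σ Υ n j := rfl
  rw [hgoal_eq, abs_mul, abs_of_pos (by positivity : (0:ℝ) < 1 / (2 * (n:ℝ) + 1))]
  by_cases hNn : N ≤ n
  · -- main case: Abel summation
    have hsinx : δ ≤ |Real.sin (π * τseq n)| := hN n hNn
    have hGbound : ∀ m, m ≤ n →
        |∑ j ∈ Finset.Icc 1 m, Real.cos (π * τseq n * (2 * (j:ℝ) - 1))| ≤ 1/(2*δ) := by
      intro m _
      have hid := cos_sum_eq (π * τseq n) m
      have h1 : |2 * Real.sin (π * τseq n)|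
            * |∑ j ∈ Finset.Icc 1 m, Real.cos (π * τseq n * (2 * (j:ℝ) - 1))|
          = |Real.sin (2*(m:ℝ)*(π * τseq n))| := by rw [← abs_mul, hid]
      have h2 : |Real.sin (2*(m:ℝ)*(π * τseq n))| ≤ 1 := Real.abs_sin_le_one _
      have h3 : 2*δ ≤ |2*Real.sin (π * τseq n)| := by
        rw [abs_mul, abs_two]; nlinarith
      rw [le_div_iff₀ (by positivity)]
      nlinarith [abs_nonneg (∑ j ∈ Finset.Icc 1 m, Real.cos (π * τseq n * (2 * (j:ℝ) - 1)))]
    have hmono : ∀ j, 1 ≤ j → j < n → (lamf σ Υ n (j+1))⁻¹ ≤ (lamf σ Υ n j)⁻¹ := by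
      intro j hj hjn
      exact inv_anti₀ (lamf_pos σ Υ hσ hΥ n hn j) (lamf_mono σ Υ hσ hΥ n hn j hj hjn)
    have habel := abel_bound (fun j => Real.cos (π * τseq n * (2 * (j:ℝ) - 1)))
      (fun j => (lamf σ Υ n j)⁻¹) (1/(2*δ)) n hn hGbound hmono
      (le_of_lt (inv_pos.mpr (lamf_pos σ Υ hσ hΥ n hn n)))
    have hsum_eq : ∑ j ∈ Finset.Icc 1 n, Real.cos (π * τseq n * (2 * (j:ℝ) - 1)) / lamf σ Υ n j
        = ∑ j ∈ Finset.Icc 1 n,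
            Real.cos (π * τseq n * (2 * (j:ℝ) - 1)) * (lamf σ Υ n j)⁻¹ :=
      Finset.sum_congr rfl fun j _ => div_eq_mul_inv _ _
    rw [hsum_eq]
    have ha1 : (lamf σ Υ n 1)⁻¹ ≤ (n:ℝ)/σ^2 := lamf_inv_le σ Υ hσ hΥ n hn 1
    have hC : (0:ℝ) < 1/(2*δ) := by positivity
    calc (1 / (2 * (n:ℝ) + 1)) * |∑ j ∈ Finset.Icc 1 n,
            Real.cos (π * τseq n * (2 * (j:ℝ) - 1)) * (lamf σ Υ n j)⁻¹|
        ≤ (1 / (2 * (n:ℝ) + 1)) * (1/(2*δ) * ((n:ℝ)/σ^2)) := by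
          apply mul_le_mul_of_nonneg_left _ (by positivity)
          calc |∑ j ∈ Finset.Icc 1 n,
                Real.cos (π * τseq n * (2 * (j:ℝ) - 1)) * (lamf σ Υ n j)⁻¹|
              ≤ 1/(2*δ) * (lamf σ Υ n 1)⁻¹ := habel
            _ ≤ 1/(2*δ) * ((n:ℝ)/σ^2) := mul_le_mul_of_nonneg_left ha1 (le_of_lt hC)
      _ ≤ 1/(4*δ*σ^2) := by
          have heq : 1 / (2 * (n:ℝ) + 1) * (1/(2*δ) * ((n:ℝ)/σ^2))
              = (n:ℝ) / ((2*(n:ℝ)+1)*(2*δ*σ^2)) := by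
            field_simp
          rw [heq, div_le_div_iff₀ (by positivity) (by positivity)]
          nlinarith [mul_pos hδ hσ2]
      _ ≤ (N:ℝ)/(2*σ^2) + 1/(4*δ*σ^2) := le_add_of_nonneg_left (by positivity)
  · -- small n: crude termwise bound
    push_neg at hNn
    have hnN : (n:ℝ) ≤ (N:ℝ) := by exact_mod_cast le_of_lt hNn
    have hterm : ∀ j ∈ Finset.Icc 1 n,
        |Real.cos (π * τseq n * (2 * (j:ℝ) - 1)) / lamf σ Υ n j| ≤ (n:ℝ)/σ^2 := by
      intro j _
      rw [abs_div, abs_of_pos (lamf_pos σ Υ hσ hΥ n hn j)]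
      calc |Real.cos (π * τseq n * (2 * (j:ℝ) - 1))| / lamf σ Υ n j
          ≤ 1 / lamf σ Υ n j := by
            gcongr
            · exact (lamf_pos σ Υ hσ hΥ n hn j).le
            · exact Real.abs_cos_le_one _
        _ = (lamf σ Υ n j)⁻¹ := one_div _
        _ ≤ (n:ℝ)/σ^2 := lamf_inv_le σ Υ hσ hΥ n hn j
    have hsum : |∑ j ∈ Finset.Icc 1 n,
        Real.cos (π * τseq n * (2 * (j:ℝ) - 1)) / lamf σ Υ n j| ≤ (n:ℝ) * ((n:ℝ)/σ^2) := by
      calc |∑ j ∈ Finset.Icc 1 n, Real.cos (π * τseq n * (2 * (j:ℝ) - 1)) / lamf σ Υ n j|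
          ≤ ∑ j ∈ Finset.Icc 1 n, |Real.cos (π * τseq n * (2 * (j:ℝ) - 1)) / lamf σ Υ n j| :=
            Finset.abs_sum_le_sum_abs _ _
        _ ≤ (Finset.Icc 1 n).card • ((n:ℝ)/σ^2) := Finset.sum_le_card_nsmul _ _ _ hterm
        _ = (n:ℝ) * ((n:ℝ)/σ^2) := by
            rw [Nat.card_Icc, Nat.add_sub_cancel, nsmul_eq_mul]
    calc (1 / (2 * (n:ℝ) + 1)) * |∑ j ∈ Finset.Icc 1 n,
            Real.cos (π * τseq n * (2 * (j:ℝ) - 1)) / lamf σ Υ n j|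
        ≤ (1 / (2 * (n:ℝ) + 1)) * ((n:ℝ) * ((n:ℝ)/σ^2)) :=
          mul_le_mul_of_nonneg_left hsum (by positivity)
      _ ≤ (N:ℝ)/(2*σ^2) := by
          have heq : (1 / (2 * (n:ℝ) + 1)) * ((n:ℝ) * ((n:ℝ)/σ^2))
              = (n:ℝ)^2/(σ^2*(2*(n:ℝ)+1)) := by field_simp
          rw [heq, div_le_div_iff₀ (by positivity) (by positivity)]
          nlinarith [mul_le_mul_of_nonneg_right hnN hn0.le, hσ2,
            mul_nonneg (Nat.cast_nonneg N) hσ2.le]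
      _ ≤ (N:ℝ)/(2*σ^2) + 1/(4*δ*σ^2) := le_add_of_nonneg_right (by positivity)
end

section
/- Let σ > 0 and Υ > 0, and for each n ≥ 1 define J_n = (2/π) ∫_{π/(2(2n+1))}^{π/2} dz / (σ²/n + 4Υ sin²z). Then the sequence J_n − (√n/σ)(σ²/n + 4Υ)^{−1/2} is bounded as n→∞; in particular n^{−1/2} J_n → (2σ√Υ)^{−1}. -/
open Real Filter


lemma arctan_le_self' {x : ℝ} (hx : 0 ≤ x) : arctan x ≤ x := by
  have h0 : 0 ≤ arctan x := by
    simpa using arctan_strictMono.monotone hx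
  calc arctan x ≤ tan (arctan x) := le_tan h0 (arctan_lt_pi_div_two x)
  _ = x := tan_arctan x

set_option maxHeartbeats 1000000 in
lemma integral_formula (a b : ℝ) (ha : 0 < a) (hb : 0 < b) (ε : ℝ) (hε : 0 < ε)
    (hε2 : ε ≤ π / 4) :
    ∫ z in ε..(π / 2), 1 / (a + b * Real.sin z ^ 2) =
      (π / 2 - arctan (Real.sqrt ((a + b) / a) * Real.tan ε)) / Real.sqrt (a * (a + b)) := by
  have hab : 0 < a + b := by linarith
  have hS : 0 < Real.sqrt (a * (a + b)) := Real.sqrt_pos.2 (by positivity)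
  set c : ℝ := Real.sqrt ((a + b) / a) with hc
  set S : ℝ := Real.sqrt (a * (a + b)) with hSdef
  have hcpos : 0 < c := Real.sqrt_pos.2 (by positivity)
  have hc2 : c ^ 2 = (a + b) / a := Real.sq_sqrt (by positivity)
  have hcc : a * c = S := by
    rw [hc, hSdef, ← Real.sqrt_sq ha.le, ← Real.sqrt_mul (sq_nonneg a)]
    congr 1
    field_simp
    ring_nf; rw [Real.sq_sqrt (sq_nonneg a)]
  have hc2' : a * c ^ 2 = a + b := by
    rw [hc2]; field_simp
  have hcinv2 : (c⁻¹) ^ 2 = a / (a + b) := by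
    rw [inv_pow, hc2, inv_div]
  have hcc2 : (a + b) * c⁻¹ = S := by
    have : c⁻¹ = Real.sqrt (a / (a + b)) := by
      rw [hc, ← Real.sqrt_inv, inv_div]
    rw [this, hSdef, ← Real.sqrt_sq hab.le, ← Real.sqrt_mul (sq_nonneg _)]
    congr 1
    field_simp
    ring_nf; rw [Real.sq_sqrt (by positivity : (0:ℝ) ≤ a * b * 2 + a ^ 2 + b ^ 2)]
  have hdenom : ∀ z : ℝ, a + b * Real.sin z ^ 2 ≠ 0 := fun z => by
    nlinarith [sq_nonneg (Real.sin z)]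
  have hdpos : ∀ z : ℝ, 0 < a + b * Real.sin z ^ 2 := fun z => by
    nlinarith [sq_nonneg (Real.sin z)]
  have hcont : Continuous fun z : ℝ => 1 / (a + b * Real.sin z ^ 2) :=
    continuous_const.div (by continuity) hdenom
  have hππ : (0:ℝ) < π := pi_pos
  -- F on [ε, π/4]
  have hF : ∀ z ∈ Set.uIcc ε (π / 4),
      HasDerivAt (fun z => arctan (c * Real.tan z) / S)
        (1 / (a + b * Real.sin z ^ 2)) z := by
    intro z hz
    rw [Set.uIcc_of_le hε2] at hz
    have hz1 : 0 < z := lt_of_lt_of_le hε hz.1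
    have hz2 : z < π / 2 := lt_of_le_of_lt hz.2 (by linarith)
    have hcos : Real.cos z ≠ 0 := ne_of_gt (Real.cos_pos_of_mem_Ioo ⟨by linarith, hz2⟩)
    have h1 : HasDerivAt (fun z => arctan (c * Real.tan z))
        ((1 / (1 + (c * Real.tan z) ^ 2)) * (c * (1 / Real.cos z ^ 2))) z :=
      (Real.hasDerivAt_arctan _).comp z ((Real.hasDerivAt_tan hcos).const_mul c)
    have hpyth : Real.sin z ^ 2 + Real.cos z ^ 2 = 1 := Real.sin_sq_add_cos_sq z
    have e1 : (1 + (c * Real.tan z) ^ 2) * (a * Real.cos z ^ 2)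
        = a + b * Real.sin z ^ 2 := by
      rw [Real.tan_eq_sin_div_cos, mul_pow, div_pow]
      have hcsq : Real.cos z ^ 2 ≠ 0 := pow_ne_zero _ hcos
      linear_combination (a * c ^ 2) * (div_mul_cancel₀ (Real.sin z ^ 2) hcsq) + Real.sin z ^ 2 * hc2' + a * hpyth
    have h1pos : 0 < 1 + (c * Real.tan z) ^ 2 := by positivity
    have key : (1 / (1 + (c * Real.tan z) ^ 2)) * (c * (1 / Real.cos z ^ 2))
        = (1 / (a + b * Real.sin z ^ 2)) * S := by
      rw [← hcc, ← e1]
      have hcsq : Real.cos z ^ 2 ≠ 0 := pow_ne_zero _ hcos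
      field_simp
    rw [key] at h1
    have h2 := h1.div_const S
    simpa [mul_div_assoc, mul_div_cancel_right₀ _ hS.ne'] using h2
  -- G on [π/4, π/2]
  have hG : ∀ z ∈ Set.uIcc (π / 4) (π / 2),
      HasDerivAt (fun z => -arctan (c⁻¹ * (Real.cos z / Real.sin z)) / S)
        (1 / (a + b * Real.sin z ^ 2)) z := by
    intro z hz
    rw [Set.uIcc_of_le (by linarith)] at hz
    have hsin : 0 < Real.sin z :=
      Real.sin_pos_of_pos_of_lt_pi (by linarith [hz.1]) (by linarith [hz.2])
    have hsne : Real.sin z ≠ 0 := hsin.ne'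
    have hpyth : Real.sin z ^ 2 + Real.cos z ^ 2 = 1 := Real.sin_sq_add_cos_sq z
    have hcot : HasDerivAt (fun z => Real.cos z / Real.sin z)
        ((-Real.sin z * Real.sin z - Real.cos z * Real.cos z) / Real.sin z ^ 2) z :=
      (Real.hasDerivAt_cos z).div (Real.hasDerivAt_sin z) hsne
    have h1 : HasDerivAt (fun z => arctan (c⁻¹ * (Real.cos z / Real.sin z)))
        ((1 / (1 + (c⁻¹ * (Real.cos z / Real.sin z)) ^ 2)) *
          (c⁻¹ * ((-Real.sin z * Real.sin z - Real.cos z * Real.cos z) / Real.sin z ^ 2))) z :=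
      (Real.hasDerivAt_arctan _).comp z (hcot.const_mul c⁻¹)
    have e2 : (1 + (c⁻¹ * (Real.cos z / Real.sin z)) ^ 2) * ((a + b) * Real.sin z ^ 2)
        = a + b * Real.sin z ^ 2 := by
      rw [mul_pow, div_pow]
      have hssq : Real.sin z ^ 2 ≠ 0 := pow_ne_zero _ hsne
      have k : (a + b) * c⁻¹ ^ 2 = a := by
        rw [hcinv2, mul_div_assoc', mul_div_cancel_left₀ _ hab.ne']
      linear_combination ((a + b) * c⁻¹ ^ 2) * (div_mul_cancel₀ (Real.cos z ^ 2) hssq) + Real.cos z ^ 2 * k + a * hpyth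
    have key : -((1 / (1 + (c⁻¹ * (Real.cos z / Real.sin z)) ^ 2)) *
          (c⁻¹ * ((-Real.sin z * Real.sin z - Real.cos z * Real.cos z) / Real.sin z ^ 2)))
        = (1 / (a + b * Real.sin z ^ 2)) * S := by
      have hnum : -Real.sin z * Real.sin z - Real.cos z * Real.cos z = -1 := by nlinarith
      rw [hnum, ← hcc2, ← e2]
      have hssq : Real.sin z ^ 2 ≠ 0 := pow_ne_zero _ hsne
      have h2pos : (0:ℝ) < 1 + (c⁻¹ * (Real.cos z / Real.sin z)) ^ 2 := by positivity
      field_simp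
    have h2 := (h1.neg).div_const S
    rw [key] at h2
    simpa [neg_div, mul_div_assoc, mul_div_cancel_right₀ _ hS.ne'] using h2
  have hint : ∀ u v : ℝ, IntervalIntegrable (fun z => 1 / (a + b * Real.sin z ^ 2))
      MeasureTheory.volume u v := fun u v => hcont.intervalIntegrable u v
  have I1 := intervalIntegral.integral_eq_sub_of_hasDerivAt hF (hint ε (π/4))
  have I2 := intervalIntegral.integral_eq_sub_of_hasDerivAt hG (hint (π/4) (π/2))
  have hsplit : ∫ z in ε..(π/2), 1 / (a + b * Real.sin z ^ 2)
      = (∫ z in ε..(π/4), 1 / (a + b * Real.sin z ^ 2))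
        + ∫ z in (π/4)..(π/2), 1 / (a + b * Real.sin z ^ 2) :=
    (intervalIntegral.integral_add_adjacent_intervals (hint ε (π/4)) (hint (π/4) (π/2))).symm
  rw [hsplit, I1, I2]
  have h75 : Real.cos (π / 4) / Real.sin (π / 4) = 1 := by
    rw [Real.cos_pi_div_four, Real.sin_pi_div_four, div_self (by positivity)]
  simp only [Real.tan_pi_div_four, h75, Real.cos_pi_div_two, Real.sin_pi_div_two, mul_one,
    zero_div, mul_zero, Real.arctan_zero, neg_zero]
  rw [arctan_inv_of_pos hcpos]
  ring

set_option maxHeartbeats 1000000 in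
/-- With `J_n = (2/π) ∫_{π/(2(2n+1))}^{π/2} dz/(σ²/n + 4Υ sin²z)`, the sequence
`J_n - (√n/σ)(σ²/n + 4Υ)^{-1/2}` is bounded as `n → ∞`; in particular
`n^{-1/2} J_n → (2σ√Υ)^{-1}`. -/
theorem stmt5 (σ Υ : ℝ) (hσ : 0 < σ) (hΥ : 0 < Υ) :
    (∃ M : ℝ, ∀ n : ℕ, 1 ≤ n →
      |(2 / π) * (∫ z in (π / (2 * (2 * (n : ℝ) + 1)))..(π / 2),
            1 / (σ ^ 2 / (n : ℝ) + 4 * Υ * Real.sin z ^ 2))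
          - Real.sqrt n / σ * (σ ^ 2 / (n : ℝ) + 4 * Υ) ^ (-(1 / 2) : ℝ)| ≤ M) ∧
    Tendsto (fun n : ℕ =>
        ((n : ℝ)) ^ (-(1 / 2) : ℝ) *
          ((2 / π) * ∫ z in (π / (2 * (2 * (n : ℝ) + 1)))..(π / 2),
            1 / (σ ^ 2 / (n : ℝ) + 4 * Υ * Real.sin z ^ 2)))
      atTop (nhds ((2 * σ * Real.sqrt Υ)⁻¹)) := by
  have hπ : (0:ℝ) < π := pi_pos
  have hs2 : Real.sqrt 2 ≤ 2 := by
    nlinarith [Real.sq_sqrt (by norm_num : (0:ℝ) ≤ 2), Real.sqrt_nonneg 2]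
  -- main bound
  have main : ∀ n : ℕ, 1 ≤ n →
      |(2 / π) * (∫ z in (π / (2 * (2 * (n : ℝ) + 1)))..(π / 2),
            1 / (σ ^ 2 / (n : ℝ) + 4 * Υ * Real.sin z ^ 2))
          - Real.sqrt n / σ * (σ ^ 2 / (n : ℝ) + 4 * Υ) ^ (-(1 / 2) : ℝ)| ≤ 1 / σ ^ 2 := by
    intro n hn
    have hN : (1:ℝ) ≤ (n:ℝ) := by exact_mod_cast hn
    have hNpos : (0:ℝ) < (n:ℝ) := by linarith
    set a : ℝ := σ ^ 2 / (n:ℝ) with hadef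
    set b : ℝ := 4 * Υ with hbdef
    have ha : 0 < a := by positivity
    have hb : 0 < b := by positivity
    have hab : 0 < a + b := by linarith
    set ε : ℝ := π / (2 * (2 * (n:ℝ) + 1)) with hεdef
    have hεpos : 0 < ε := by positivity
    have hε4 : ε ≤ π / 4 := by
      rw [hεdef, div_le_div_iff₀ (by positivity) (by norm_num)]
      nlinarith
    set c : ℝ := Real.sqrt ((a + b) / a) with hc
    set S : ℝ := Real.sqrt (a * (a + b)) with hSdef
    have hSpos : 0 < S := Real.sqrt_pos.2 (by positivity)
    have hcpos : 0 < c := Real.sqrt_pos.2 (by positivity)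
    have hcc : a * c = S := by
      rw [hc, hSdef, ← Real.sqrt_sq ha.le, ← Real.sqrt_mul (sq_nonneg a)]
      congr 1
      field_simp
      ring_nf; rw [Real.sq_sqrt (sq_nonneg a)]
    have hI := integral_formula a b ha hb ε hεpos hε4
    -- T = 1/S
    have hT : Real.sqrt n / σ * (a + b) ^ (-(1 / 2) : ℝ) = 1 / S := by
      rw [Real.rpow_neg hab.le, ← Real.sqrt_eq_rpow, hSdef,
        Real.sqrt_mul ha.le, hadef]
      have h1 : Real.sqrt (σ ^ 2 / (n:ℝ)) = σ / Real.sqrt n := by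
        rw [Real.sqrt_div (sq_nonneg σ), Real.sqrt_sq hσ.le]
      rw [h1]
      have hsn : (0:ℝ) < Real.sqrt (n:ℝ) := Real.sqrt_pos.2 hNpos
      have hsq : Real.sqrt (n:ℝ) * Real.sqrt (n:ℝ) = (n:ℝ) := Real.mul_self_sqrt hNpos.le
      have habs : (0:ℝ) < Real.sqrt (σ ^ 2 / ↑n + b) := Real.sqrt_pos.2 (by positivity)
      field_simp
    rw [hI, hT]
    have htannn : 0 ≤ Real.tan ε :=
      Real.tan_nonneg_of_nonneg_of_le_pi_div_two hεpos.le (by linarith)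
    have harct_nonneg : 0 ≤ arctan (Real.sqrt ((a + b) / a) * Real.tan ε) := by
      have : (0:ℝ) ≤ Real.sqrt ((a + b) / a) * Real.tan ε := by positivity
      simpa using arctan_strictMono.monotone this
    have hD : 2 / π * ((π / 2 - arctan (Real.sqrt ((a + b) / a) * Real.tan ε)) /
          Real.sqrt (a * (a + b))) - 1 / Real.sqrt (a * (a + b))
        = -(2 / π * arctan (Real.sqrt ((a + b) / a) * Real.tan ε) / S) := by
      rw [← hSdef]
      field_simp
      ring
    rw [hD, abs_neg, abs_of_nonneg (by positivity)]
    -- tan ε ≤ √2 * ε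
    have h2 : Real.sqrt 2 * Real.sqrt 2 = 2 := Real.mul_self_sqrt (by norm_num)
    have hcos : Real.sqrt 2 / 2 ≤ Real.cos ε := by
      rw [← Real.cos_pi_div_four]
      exact Real.cos_le_cos_of_nonneg_of_le_pi hεpos.le (by linarith) hε4
    have htan : Real.tan ε ≤ Real.sqrt 2 * ε := by
      have h3 : Real.tan ε ≤ ε / (Real.sqrt 2 / 2) := by
        rw [Real.tan_eq_sin_div_cos]
        exact div_le_div₀ (le_of_lt hεpos) (Real.sin_le hεpos.le) (by positivity) hcos
      have h4 : ε / (Real.sqrt 2 / 2) = Real.sqrt 2 * ε := by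
        rw [div_eq_iff (by positivity)]
        linear_combination -(ε / 2) * h2
      linarith
    have h5 : arctan (Real.sqrt ((a + b) / a) * Real.tan ε) ≤ c * (Real.sqrt 2 * ε) := by
      rw [← hc]
      refine le_trans (arctan_le_self' (mul_nonneg hcpos.le htannn)) ?_
      have := mul_le_mul_of_nonneg_left htan hcpos.le
      linarith
    have hval : 2 / π * (c * (Real.sqrt 2 * ε)) / S
        = Real.sqrt 2 * (n:ℝ) / ((2 * (n:ℝ) + 1) * σ ^ 2) := by
      rw [← hcc, hεdef, hadef]
      field_simp
    calc 2 / π * arctan (Real.sqrt ((a + b) / a) * Real.tan ε) / S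
        ≤ 2 / π * (c * (Real.sqrt 2 * ε)) / S := by gcongr
      _ = Real.sqrt 2 * (n:ℝ) / ((2 * (n:ℝ) + 1) * σ ^ 2) := hval
      _ ≤ 1 / σ ^ 2 := by
          rw [div_le_div_iff₀ (by positivity) (by positivity)]
          have hσ2 : (0:ℝ) < σ ^ 2 := by positivity
          nlinarith [mul_le_mul_of_nonneg_right hs2 hNpos.le]
  refine ⟨⟨1 / σ ^ 2, main⟩, ?_⟩
  -- Part 2
  have hgσ : Tendsto (fun n : ℕ => 1 / σ * (σ ^ 2 / (n:ℝ) + 4 * Υ) ^ (-(1 / 2) : ℝ))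
      atTop (nhds ((2 * σ * Real.sqrt Υ)⁻¹)) := by
    have h1 : Tendsto (fun n : ℕ => σ ^ 2 / (n:ℝ) + 4 * Υ) atTop (nhds (4 * Υ)) := by
      have := tendsto_const_div_atTop_nhds_zero_nat (σ ^ 2)
      have := this.add (tendsto_const_nhds (x := 4 * Υ))
      simpa using this
    have h2 : ContinuousAt (fun x : ℝ => x ^ (-(1 / 2) : ℝ)) (4 * Υ) :=
      Real.continuousAt_rpow_const _ _ (Or.inl (by positivity))
    have h3 := (h2.tendsto.comp h1).const_mul (1 / σ)
    have h4 : 1 / σ * (4 * Υ) ^ (-(1 / 2) : ℝ) = (2 * σ * Real.sqrt Υ)⁻¹ := by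
      rw [Real.rpow_neg (by positivity), ← Real.sqrt_eq_rpow,
        show (4 : ℝ) * Υ = 2 ^ 2 * Υ by norm_num, Real.sqrt_mul (by positivity),
        Real.sqrt_sq (by norm_num : (0:ℝ) ≤ 2)]
      rw [mul_comm 2 σ]
      field_simp
    rw [h4] at h3
    exact h3.congr (fun n => rfl)
  have hzero : Tendsto (fun n : ℕ => ((n:ℝ)) ^ (-(1 / 2) : ℝ) *
      ((2 / π) * (∫ z in (π / (2 * (2 * (n : ℝ) + 1)))..(π / 2),
            1 / (σ ^ 2 / (n : ℝ) + 4 * Υ * Real.sin z ^ 2))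
          - Real.sqrt n / σ * (σ ^ 2 / (n : ℝ) + 4 * Υ) ^ (-(1 / 2) : ℝ)))
      atTop (nhds 0) := by
    apply squeeze_zero_norm' (a := fun n : ℕ => ((n:ℝ)) ^ (-(1 / 2) : ℝ) * (1 / σ ^ 2))
    · filter_upwards [eventually_ge_atTop 1] with n hn
      have hNpos : (0:ℝ) < (n:ℝ) := by exact_mod_cast hn
      have hrpos : (0:ℝ) ≤ ((n:ℝ)) ^ (-(1 / 2) : ℝ) := Real.rpow_nonneg hNpos.le _
      rw [norm_mul, Real.norm_eq_abs, Real.norm_eq_abs, abs_of_nonneg hrpos]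
      exact mul_le_mul_of_nonneg_left (main n hn) hrpos
    · have h1 : Tendsto (fun x : ℝ => x ^ (-(1 / 2) : ℝ)) atTop (nhds 0) :=
        tendsto_rpow_neg_atTop (by norm_num)
      have h2 := (h1.comp (tendsto_natCast_atTop_atTop (R := ℝ))).mul_const (1 / σ ^ 2)
      simpa using h2
  have hsum := hzero.add hgσ
  rw [zero_add] at hsum
  apply hsum.congr'
  filter_upwards [eventually_ge_atTop 1] with n hn
  have hNpos : (0:ℝ) < (n:ℝ) := by exact_mod_cast hn
  have hsn : (0:ℝ) < Real.sqrt (n:ℝ) := Real.sqrt_pos.2 hNpos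
  have hinv : ((n:ℝ)) ^ (-(1 / 2) : ℝ) = (Real.sqrt (n:ℝ))⁻¹ := by
    rw [Real.rpow_neg hNpos.le, ← Real.sqrt_eq_rpow]
  have key : ((n:ℝ)) ^ (-(1 / 2) : ℝ) * (Real.sqrt n / σ * (σ ^ 2 / (n : ℝ) + 4 * Υ) ^ (-(1 / 2) : ℝ))
      = 1 / σ * (σ ^ 2 / (n:ℝ) + 4 * Υ) ^ (-(1 / 2) : ℝ) := by
    rw [hinv]
    field_simp
  rw [mul_sub, key]
  ring
end

section
/- Let g : ℝ → ℝ satisfy condition [W]. Set ψ₂ = ∫_{−∞}^∞ g(x)² dx, φ_{u,v}(y) = ∫_{−∞}^∞ u(x−y)v(x) dx for functions u,v, Φ₂₂ = ∫₀^∞ φ_{g,g}(y)² dy and Φ₁₂ = ∫₀^∞ φ_{g,g}(y) φ_{g',g'}(y) dy. Then for every θ > 0 and all σ > 0, Υ > 0 one has (8/ψ₂²)(Φ₂₂ θ σ² + Φ₁₂ Υ/θ) > 8σ√Υ. In particular there is no weight function g satisfying [W] and no θ > 0 for which the jump-part asymptotic variance coefficient (8/ψ₂²)(Φ₂₂ θ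 σ² + Φ₁₂ Υ/θ) attains the lower bound 8σ√Υ. -/
open Real Filter MeasureTheory Topology

/-- `g` is piecewise `C¹` with a piecewise Lipschitz derivative `g'`: outside a finite set
of breakpoints `g` has derivative `g'`, and `g'` is Lipschitz on each piece. -/
def PiecewiseC1LipDeriv (g g' : ℝ → ℝ) : Prop :=
  ∃ s : Finset ℝ, (∀ x : ℝ, x ∉ s → HasDerivAt g (g' x) x) ∧
    ∃ L : ℝ, 0 ≤ L ∧ ∀ x y : ℝ, (∀ z ∈ s, z ∉ Set.Ioo (min x y) (max x y)) →
      |g' x - g' y| ≤ L * |x - y|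

/-- Condition [W] on a weight function `g` with derivative `g'`:
(i) `g` is continuous and piecewise `C¹` with a piecewise Lipschitz derivative `g'`;
(ii) `|g(x)| + |g'(x)| ≤ C_r (1+x²)^{-r}` for every `r > 0`;
(iii) `∫ g² > 0`. -/
structure CondW (g g' : ℝ → ℝ) : Prop where
  cont : Continuous g
  piecewise : PiecewiseC1LipDeriv g g'
  decay : ∀ r : ℝ, 0 < r → ∃ C : ℝ, ∀ x : ℝ, |g x| + |g' x| ≤ C * (1 + x ^ 2) ^ (-r)
  pos : 0 < ∫ x : ℝ, g x ^ 2

section Aux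

lemma aux_ptwise (x y : ℝ) :
    (1+(x-y)^2)⁻¹ * (1+x^2)⁻¹ ≤ 4*(1+y^2)⁻¹ * ((1+(x-y)^2)⁻¹ + (1+x^2)⁻¹) := by
  have h1 : (0:ℝ) < 1 + (x-y)^2 := by positivity
  have h2 : (0:ℝ) < 1 + x^2 := by positivity
  have h3 : (0:ℝ) < 1 + y^2 := by positivity
  by_cases hc : y^2 ≤ 4*x^2
  · have e1 : (1+x^2)⁻¹ ≤ 4*(1+y^2)⁻¹ := by
      rw [show (4:ℝ)*(1+y^2)⁻¹ = ((1+y^2)/4)⁻¹ by field_simp]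
      exact inv_anti₀ (by positivity) (by nlinarith)
    have h4 : (0:ℝ) ≤ 4*(1+y^2)⁻¹ * (1+x^2)⁻¹ := by positivity
    calc (1+(x-y)^2)⁻¹ * (1+x^2)⁻¹ ≤ (1+(x-y)^2)⁻¹ * (4*(1+y^2)⁻¹) :=
          mul_le_mul_of_nonneg_left e1 (by positivity)
      _ ≤ 4*(1+y^2)⁻¹ * ((1+(x-y)^2)⁻¹ + (1+x^2)⁻¹) := by nlinarith
  · have hc2 : y^2 ≤ 4*(x-y)^2 := by nlinarith [sq_nonneg (y - 2*x)]
    have e1 : (1+(x-y)^2)⁻¹ ≤ 4*(1+y^2)⁻¹ := by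
      rw [show (4:ℝ)*(1+y^2)⁻¹ = ((1+y^2)/4)⁻¹ by field_simp]
      exact inv_anti₀ (by positivity) (by nlinarith)
    have h4 : (0:ℝ) ≤ 4*(1+y^2)⁻¹ * (1+(x-y)^2)⁻¹ := by positivity
    calc (1+(x-y)^2)⁻¹ * (1+x^2)⁻¹ ≤ (4*(1+y^2)⁻¹) * (1+x^2)⁻¹ :=
          mul_le_mul_of_nonneg_right e1 (by positivity)
      _ ≤ 4*(1+y^2)⁻¹ * ((1+(x-y)^2)⁻¹ + (1+x^2)⁻¹) := by nlinarith

lemma aux_integrable {K : ℝ} {f : ℝ → ℝ} (hm : AEStronglyMeasurable f volume)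
    (hb : ∀ x, |f x| ≤ K * (1+x^2)⁻¹) : Integrable f :=
  (integrable_inv_one_add_sq.const_mul K).mono' hm (Eventually.of_forall fun x => by
    simpa [Real.norm_eq_abs] using hb x)

lemma aux_shift_meas {u : ℝ → ℝ} (hum : AEStronglyMeasurable u (volume : Measure ℝ)) (y : ℝ) :
    AEStronglyMeasurable (fun x => u (x - y)) (volume : Measure ℝ) :=
  hum.comp_quasiMeasurePreserving (measurePreserving_sub_right volume y).quasiMeasurePreserving

lemma aux_conv_int {C : ℝ} (hC : 0 ≤ C) {u v : ℝ → ℝ}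
    (hum : AEStronglyMeasurable u (volume : Measure ℝ))
    (hvm : AEStronglyMeasurable v (volume : Measure ℝ))
    (hu : ∀ x, |u x| ≤ C * (1+x^2)⁻¹) (hv : ∀ x, |v x| ≤ C * (1+x^2)⁻¹) (y : ℝ) :
    Integrable (fun x => u (x - y) * v x) := by
  apply aux_integrable (K := C*C) ((aux_shift_meas hum y).mul hvm)
  intro x
  have h1 : |u (x-y)| ≤ C := by
    refine (hu (x-y)).trans ?_
    nlinarith [sq_nonneg (x-y), inv_le_one_of_one_le₀ (by nlinarith [sq_nonneg (x-y)] : (1:ℝ) ≤ 1+(x-y)^2),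
      inv_nonneg.2 (by positivity : (0:ℝ) ≤ 1+(x-y)^2)]
  calc |u (x-y) * v x| = |u (x-y)| * |v x| := abs_mul _ _
    _ ≤ C * (C * (1+x^2)⁻¹) := mul_le_mul h1 (hv x) (abs_nonneg _) hC
    _ = C*C * (1+x^2)⁻¹ := by ring

lemma aux_shift_int (y : ℝ) : Integrable (fun x : ℝ => (1+(x-y)^2)⁻¹) := by
  have := (measurePreserving_sub_right (volume : Measure ℝ) y).integrable_comp
    (integrable_inv_one_add_sq).aestronglyMeasurable
  exact this.2 integrable_inv_one_add_sq

lemma aux_conv_bound {C : ℝ} (hC : 0 ≤ C) {u v : ℝ → ℝ}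
    (hum : AEStronglyMeasurable u (volume : Measure ℝ))
    (hvm : AEStronglyMeasurable v (volume : Measure ℝ))
    (hu : ∀ x, |u x| ≤ C * (1+x^2)⁻¹) (hv : ∀ x, |v x| ≤ C * (1+x^2)⁻¹) (y : ℝ) :
    |∫ x, u (x - y) * v x| ≤ 8*π*C^2 * (1+y^2)⁻¹ := by
  have hi := aux_conv_int hC hum hvm hu hv y
  have hW : Integrable (fun x : ℝ => 4*C^2*(1+y^2)⁻¹ * ((1+(x-y)^2)⁻¹ + (1+x^2)⁻¹)) :=
    ((aux_shift_int y).add integrable_inv_one_add_sq).const_mul _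
  have hpt : ∀ x, |u (x-y) * v x| ≤ 4*C^2*(1+y^2)⁻¹ * ((1+(x-y)^2)⁻¹ + (1+x^2)⁻¹) := by
    intro x
    have h1 : |u (x-y) * v x| ≤ C^2 * ((1+(x-y)^2)⁻¹ * (1+x^2)⁻¹) := by
      rw [abs_mul]
      calc |u (x-y)| * |v x| ≤ (C * (1+(x-y)^2)⁻¹) * (C * (1+x^2)⁻¹) :=
            mul_le_mul (hu _) (hv _) (abs_nonneg _) (by positivity)
        _ = C^2 * ((1+(x-y)^2)⁻¹ * (1+x^2)⁻¹) := by ring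
    refine h1.trans ?_
    have := aux_ptwise x y
    calc C^2 * ((1+(x-y)^2)⁻¹ * (1+x^2)⁻¹)
        ≤ C^2 * (4*(1+y^2)⁻¹ * ((1+(x-y)^2)⁻¹ + (1+x^2)⁻¹)) :=
          mul_le_mul_of_nonneg_left this (by positivity)
      _ = 4*C^2*(1+y^2)⁻¹ * ((1+(x-y)^2)⁻¹ + (1+x^2)⁻¹) := by ring
  calc |∫ x, u (x - y) * v x| ≤ ∫ x, |u (x-y) * v x| := by
        simpa [Real.norm_eq_abs, abs_mul] using
          norm_integral_le_integral_norm (μ := volume) (fun x => u (x-y) * v x)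
    _ ≤ ∫ x, 4*C^2*(1+y^2)⁻¹ * ((1+(x-y)^2)⁻¹ + (1+x^2)⁻¹) :=
        integral_mono hi.abs hW hpt
    _ = 4*C^2*(1+y^2)⁻¹ * (π + π) := by
        rw [MeasureTheory.integral_const_mul, integral_add (aux_shift_int y) integrable_inv_one_add_sq]
        congr 2
        · exact (integral_sub_right_eq_self (fun t : ℝ => (1+t^2)⁻¹) y).trans
            integral_univ_inv_one_add_sq
        · exact integral_univ_inv_one_add_sq
    _ = 8*π*C^2 * (1+y^2)⁻¹ := by ring

lemma aux_lip_aux (g g' : ℝ → ℝ) (hc : Continuous g)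
    (hm : AEStronglyMeasurable g' (volume : Measure ℝ)) (C : ℝ) (hC : ∀ x, |g' x| ≤ C) :
    ∀ s : Finset ℝ, ∀ a b : ℝ, a ≤ b →
      (∀ x ∈ Set.Ioo a b, x ∉ s → HasDerivAt g (g' x) x) → |g b - g a| ≤ C * (b - a) := by
  intro s
  induction s using Finset.strongInduction with
  | _ s ih =>
    intro a b hab hder
    by_cases hex : ∃ t ∈ s, t ∈ Set.Ioo a b
    · obtain ⟨t, hts, hta, htb⟩ := hex
      have h1 : |g t - g a| ≤ C * (t - a) := by
        refine ih (s.erase t) (Finset.erase_ssubset hts) a t hta.le ?_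
        intro x hx hxs
        refine hder x ⟨hx.1, hx.2.trans htb⟩ fun hxin => hxs ?_
        exact Finset.mem_erase.2 ⟨ne_of_lt hx.2, hxin⟩
      have h2 : |g b - g t| ≤ C * (b - t) := by
        refine ih (s.erase t) (Finset.erase_ssubset hts) t b htb.le ?_
        intro x hx hxs
        refine hder x ⟨hta.trans hx.1, hx.2⟩ fun hxin => hxs ?_
        exact Finset.mem_erase.2 ⟨(ne_of_lt hx.1).symm, hxin⟩
      calc |g b - g a| ≤ |g b - g t| + |g t - g a| := abs_sub_le _ _ _
        _ ≤ C * (b - t) + C * (t - a) := add_le_add h2 h1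
        _ = C * (b - a) := by ring
    · push_neg at hex
      have hder' : ∀ x ∈ Set.Ioo a b, HasDerivAt g (g' x) x := fun x hx =>
        hder x hx fun hxs => hex x hxs hx
      have hint : IntervalIntegrable g' volume a b := by
        rw [intervalIntegrable_iff_integrableOn_Ioc_of_le hab]
        refine Integrable.mono' (g := fun _ => C)
          (integrableOn_const measure_Ioc_lt_top.ne) hm.restrict
          (Eventually.of_forall fun x => ?_)
        simpa [Real.norm_eq_abs] using hC x
      have heq : ∫ x in a..b, g' x = g b - g a :=
        intervalIntegral.integral_eq_sub_of_hasDeriv_right_of_le hab hc.continuousOn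
          (fun x hx => (hder' x hx).hasDerivWithinAt) hint
      rw [← heq]
      have := intervalIntegral.norm_integral_le_of_norm_le_const
        (C := C) (f := g') (a := a) (b := b) (fun x _ => by simpa [Real.norm_eq_abs] using hC x)
      rwa [Real.norm_eq_abs, abs_of_nonneg (sub_nonneg.2 hab)] at this

lemma aux_lip (g g' : ℝ → ℝ) (hc : Continuous g)
    (hm : AEStronglyMeasurable g' (volume : Measure ℝ)) (C : ℝ) (hC : ∀ x, |g' x| ≤ C)
    (s : Finset ℝ) (hder : ∀ x, x ∉ s → HasDerivAt g (g' x) x) :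
    ∀ a b : ℝ, |g a - g b| ≤ C * |a - b| := by
  intro a b
  rcases le_total a b with h | h
  · rw [abs_sub_comm (g a), abs_sub_comm a b, abs_of_nonneg (sub_nonneg.2 h)]
    exact aux_lip_aux g g' hc hm C hC s a b h (fun x _ hx => hder x hx)
  · rw [abs_of_nonneg (sub_nonneg.2 h)]
    exact aux_lip_aux g g' hc hm C hC s b a h (fun x _ hx => hder x hx)

lemma aux_ae_finset (s : Finset ℝ) (c : ℝ) : ∀ᵐ x : ℝ, x - c ∉ (↑s : Set ℝ) := by
  rw [ae_iff]
  have h : {x : ℝ | ¬ x - c ∉ (↑s : Set ℝ)} = (fun t => t + c) '' ↑s := by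
    ext z
    simp only [Set.mem_setOf_eq, not_not, Set.mem_image]
    constructor
    · intro h; exact ⟨z - c, h, by ring⟩
    · rintro ⟨t, ht, rfl⟩; simpa using ht
  rw [h]
  exact ((s.finite_toSet).image _).measure_zero volume

lemma aux_D1 (g g' : ℝ → ℝ) (hgc : Continuous g)
    (hgm : AEStronglyMeasurable g (volume : Measure ℝ))
    (hg'm : AEStronglyMeasurable g' (volume : Measure ℝ))
    (C : ℝ) (hC0 : 0 ≤ C)
    (hgb : ∀ x, |g x| ≤ C * (1+x^2)⁻¹)
    (hglip : ∀ a b : ℝ, |g a - g b| ≤ C * |a - b|)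
    (s : Finset ℝ) (hds : ∀ x ∉ s, HasDerivAt g (g' x) x) (y₀ : ℝ) :
    HasDerivAt (fun y => ∫ x, g (x - y) * g x) (-(∫ x, g' (x - y₀) * g x)) y₀ := by
  have key := hasDerivAt_integral_of_dominated_loc_of_lip
    (F := fun y x => g (x - y) * g x) (F' := fun x => -(g' (x - y₀) * g x))
    (x₀ := y₀) (bound := fun x => C * |g x|) (s := Metric.ball y₀ 1) (Metric.ball_mem_nhds y₀ one_pos)
    (Eventually.of_forall fun y =>
      ((hgc.comp (continuous_id.sub continuous_const)).mul hgc).aestronglyMeasurable)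
    (aux_conv_int hC0 hgm hgm hgb hgb y₀)
    (((aux_shift_meas hg'm y₀).mul hgm).neg)
    (Eventually.of_forall fun x => by
      apply LipschitzWith.lipschitzOnWith
      apply LipschitzWith.of_dist_le_mul
      intro y₁ y₂
      simp only [Real.dist_eq]
      have h1 : |g (x - y₁) * g x - g (x - y₂) * g x| = |g (x - y₁) - g (x - y₂)| * |g x| := by
        rw [← abs_mul]; ring_nf
      rw [h1]
      have h2 : |g (x - y₁) - g (x - y₂)| ≤ C * |y₁ - y₂| := by
        have := hglip (x - y₁) (x - y₂)
        have h3 : |x - y₁ - (x - y₂)| = |y₁ - y₂| := by rw [abs_sub_comm]; ring_nf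
        rwa [h3] at this
      calc |g (x - y₁) - g (x - y₂)| * |g x| ≤ (C * |y₁ - y₂|) * |g x| :=
            mul_le_mul_of_nonneg_right h2 (abs_nonneg _)
        _ = ↑(Real.nnabs (C * |g x|)) * |y₁ - y₂| := by
            rw [Real.coe_nnabs, abs_of_nonneg (by positivity : (0:ℝ) ≤ C * |g x|)]; ring)
    ((aux_integrable hgm hgb).abs.const_mul C)
    (by
      filter_upwards [aux_ae_finset s y₀] with x hx
      have h1 : HasDerivAt (fun y : ℝ => x - y) (-1) y₀ := by
        simpa using (hasDerivAt_id y₀).const_sub x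
      have h2 : HasDerivAt g (g' (x - y₀)) (x - y₀) := hds _ hx
      have h3 := (h2.comp y₀ h1).mul_const (g x)
      refine h3.congr_deriv ?_
      ring)
  have heq : (∫ x, -(g' (x - y₀) * g x)) = -(∫ x, g' (x - y₀) * g x) := integral_neg _
  exact heq ▸ key.2

lemma aux_D2 (g g' : ℝ → ℝ) (hgc : Continuous g)
    (hg'm : AEStronglyMeasurable g' (volume : Measure ℝ))
    (C : ℝ) (hC0 : 0 ≤ C)
    (hg'b : ∀ x, |g' x| ≤ C * (1+x^2)⁻¹)
    (hgC : ∀ x, |g x| ≤ C)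
    (hglip : ∀ a b : ℝ, |g a - g b| ≤ C * |a - b|)
    (s : Finset ℝ) (hds : ∀ x ∉ s, HasDerivAt g (g' x) x) (y₀ : ℝ) :
    HasDerivAt (fun y => ∫ x, g' (x - y) * g x) (∫ x, g' (x - y₀) * g' x) y₀ := by
  have hηalt : (fun y => ∫ x, g' (x - y) * g x) = fun y => ∫ u, g' u * g (u + y) := by
    funext y
    have h := integral_sub_right_eq_self (μ := volume) (fun u => g' u * g (u + y)) y
    simp only [sub_add_cancel] at h
    exact h
  rw [hηalt]
  have hshiftadd : ∀ c : ℝ, AEStronglyMeasurable (fun x => g' (x + c)) (volume : Measure ℝ) := by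
    intro c
    have := aux_shift_meas hg'm (-c)
    simpa [sub_neg_eq_add] using this
  have key := hasDerivAt_integral_of_dominated_loc_of_lip
    (F := fun y u => g' u * g (u + y)) (F' := fun u => g' u * g' (u + y₀))
    (x₀ := y₀) (bound := fun u => C * |g' u|) (s := Metric.ball y₀ 1) (Metric.ball_mem_nhds y₀ one_pos)
    (Eventually.of_forall fun y =>
      hg'm.mul ((hgc.comp (continuous_id.add continuous_const)).aestronglyMeasurable))
    (by
      apply aux_integrable (K := C*C)
        (hg'm.mul ((hgc.comp (continuous_id.add continuous_const)).aestronglyMeasurable))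
      intro u
      calc |g' u * g (u + y₀)| = |g' u| * |g (u + y₀)| := abs_mul _ _
        _ ≤ (C * (1+u^2)⁻¹) * C := mul_le_mul (hg'b u) (hgC _) (abs_nonneg _) (by positivity)
        _ = C*C * (1+u^2)⁻¹ := by ring)
    (hg'm.mul (hshiftadd y₀))
    (Eventually.of_forall fun u => by
      apply LipschitzWith.lipschitzOnWith
      apply LipschitzWith.of_dist_le_mul
      intro y₁ y₂
      simp only [Real.dist_eq]
      have h1 : |g' u * g (u + y₁) - g' u * g (u + y₂)| = |g' u| * |g (u + y₁) - g (u + y₂)| := by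
        rw [← abs_mul]; ring_nf
      rw [h1]
      have h2 : |g (u + y₁) - g (u + y₂)| ≤ C * |y₁ - y₂| := by
        have := hglip (u + y₁) (u + y₂)
        have h3 : |u + y₁ - (u + y₂)| = |y₁ - y₂| := by ring_nf
        rwa [h3] at this
      calc |g' u| * |g (u + y₁) - g (u + y₂)| ≤ |g' u| * (C * |y₁ - y₂|) :=
            mul_le_mul_of_nonneg_left h2 (abs_nonneg _)
        _ = ↑(Real.nnabs (C * |g' u|)) * |y₁ - y₂| := by
            rw [Real.coe_nnabs, abs_of_nonneg (by positivity : (0:ℝ) ≤ C * |g' u|)]; ring)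
    ((aux_integrable hg'm hg'b).abs.const_mul C)
    (by
      filter_upwards [aux_ae_finset s (-y₀)] with u hu
      have hu' : u + y₀ ∉ s := by simpa [sub_neg_eq_add] using hu
      have h1 : HasDerivAt (fun y : ℝ => u + y) 1 y₀ := by
        simpa using (hasDerivAt_id y₀).const_add u
      have h2 : HasDerivAt g (g' (u + y₀)) (u + y₀) := hds _ hu'
      have h3 := (h2.comp y₀ h1).const_mul (g' u)
      refine h3.congr_deriv ?_
      ring)
  have heq : (∫ u, g' u * g' (u + y₀)) = ∫ x, g' (x - y₀) * g' x := by
    have h := integral_sub_right_eq_self (μ := volume) (fun u => g' u * g' (u + y₀)) y₀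
    simp only [sub_add_cancel] at h
    exact h.symm
  exact heq ▸ key.2

end Aux

set_option maxHeartbeats 2000000 in
/-- No weight function satisfying [W] attains the efficiency bound `8σ√Υ` for the
jump-part asymptotic variance: for every `θ > 0`, `σ > 0`, `Υ > 0` one has the strict
inequality `(8/ψ₂²)(Φ₂₂ θ σ² + Φ₁₂ Υ/θ) > 8σ√Υ`, where `ψ₂ = ∫ g²`,
`Φ₂₂ = ∫₀^∞ φ_{g,g}(y)² dy` and `Φ₁₂ = ∫₀^∞ φ_{g,g}(y)φ_{g',g'}(y) dy` with
`φ_{u,v}(y) = ∫ u(x-y)v(x) dx`. -/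
theorem stmt7 (g g' : ℝ → ℝ) (hW : CondW g g')
    (θ σ Υ : ℝ) (hθ : 0 < θ) (hσ : 0 < σ) (hΥ : 0 < Υ) :
    8 * σ * Real.sqrt Υ <
      8 / (∫ x : ℝ, g x ^ 2) ^ 2 *
        ((∫ y in Set.Ioi (0 : ℝ), (∫ x : ℝ, g (x - y) * g x) ^ 2) * θ * σ ^ 2
          + (∫ y in Set.Ioi (0 : ℝ),
              (∫ x : ℝ, g (x - y) * g x) * (∫ x : ℝ, g' (x - y) * g' x)) * Υ / θ) := by
  obtain ⟨s, hds, L, hL0, hLip⟩ := hW.piecewise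
  obtain ⟨C, hCb⟩ := hW.decay 1 one_pos
  have hCb' : ∀ x : ℝ, |g x| ≤ C * (1+x^2)⁻¹ ∧ |g' x| ≤ C * (1+x^2)⁻¹ := by
    intro x
    have h := hCb x
    rw [show ((1:ℝ) + x^2) ^ (-(1:ℝ)) = (1+x^2)⁻¹ from Real.rpow_neg_one _] at h
    exact ⟨by linarith [abs_nonneg (g' x)], by linarith [abs_nonneg (g x)]⟩
  have hgb : ∀ x, |g x| ≤ C * (1+x^2)⁻¹ := fun x => (hCb' x).1
  have hg'b : ∀ x, |g' x| ≤ C * (1+x^2)⁻¹ := fun x => (hCb' x).2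
  have hC0 : 0 ≤ C := by
    have := hgb 0
    have h0 : ((1:ℝ) + 0^2)⁻¹ = 1 := by norm_num
    rw [h0] at this
    nlinarith [abs_nonneg (g 0)]
  have hinvle : ∀ t : ℝ, ((1:ℝ)+t^2)⁻¹ ≤ 1 := fun t =>
    inv_le_one_of_one_le₀ (by nlinarith [sq_nonneg t])
  have hinv0 : ∀ t : ℝ, (0:ℝ) ≤ (1+t^2)⁻¹ := fun t => by positivity
  have hgC : ∀ x, |g x| ≤ C := fun x => (hgb x).trans (by nlinarith [hinvle x, hinv0 x])
  have hg'C : ∀ x, |g' x| ≤ C := fun x => (hg'b x).trans (by nlinarith [hinvle x, hinv0 x])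
  have hgm : AEStronglyMeasurable g volume := hW.cont.aestronglyMeasurable
  have hg'm : AEStronglyMeasurable g' volume := by
    refine ((measurable_deriv g).aestronglyMeasurable).congr ?_
    refine MeasureTheory.ae_iff.2 ?_
    refine measure_mono_null (fun x hx => ?_) (s.finite_toSet.measure_zero volume)
    by_contra hxs
    exact hx ((hds x hxs).deriv)
  have hglip : ∀ a b : ℝ, |g a - g b| ≤ C * |a - b| :=
    aux_lip g g' hW.cont hg'm C hg'C s hds
  set ψ := ∫ x : ℝ, g x ^ 2 with hψdef
  have hψpos : 0 < ψ := hW.pos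
  set φ : ℝ → ℝ := fun y => ∫ x, g (x - y) * g x with hφdef
  set η : ℝ → ℝ := fun y => ∫ x, g' (x - y) * g x with hηdef
  set χ : ℝ → ℝ := fun y => ∫ x, g' (x - y) * g' x with hχdef
  have hD1 : ∀ y₀ : ℝ, HasDerivAt φ (-η y₀) y₀ := fun y₀ =>
    aux_D1 g g' hW.cont hgm hg'm C hC0 hgb hglip s hds y₀
  have hD2 : ∀ y₀ : ℝ, HasDerivAt η (χ y₀) y₀ := fun y₀ =>
    aux_D2 g g' hW.cont hg'm C hC0 hg'b hgC hglip s hds y₀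
  have hφcont : Continuous φ := by
    rw [continuous_iff_continuousAt]; exact fun y => (hD1 y).continuousAt
  have hηcont : Continuous η := by
    rw [continuous_iff_continuousAt]; exact fun y => (hD2 y).continuousAt
  have hχm : AEStronglyMeasurable χ volume := by
    have h : χ = deriv η := funext fun y => ((hD2 y).deriv).symm
    rw [h]; exact (measurable_deriv η).aestronglyMeasurable
  -- φ is even, η 0 = 0
  have hφ0ψ : φ 0 = ψ := by
    simp only [hφdef, sub_zero, hψdef, pow_two]
  have heven : ∀ y, φ (-y) = φ y := by
    intro y
    have h1 := integral_sub_right_eq_self (μ := volume) (fun u => g u * g (u + y)) y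
    simp only [sub_add_cancel] at h1
    -- h1 : ∫ x, g (x - y) * g x ... need to check shape
    calc φ (-y) = ∫ x, g (x + y) * g x := by simp only [hφdef, sub_neg_eq_add]
      _ = ∫ u, g u * g (u + y) := by congr 1; funext x; ring
      _ = φ y := by rw [← h1]
  have hη0 : η 0 = 0 := by
    have h1 : HasDerivAt φ (-η 0) 0 := hD1 0
    have hneg : HasDerivAt (fun y : ℝ => -y) (-1) (0:ℝ) := hasDerivAt_neg 0
    have hφn : HasDerivAt φ (-η 0) ((fun y : ℝ => -y) 0) := by simpa using hD1 0
    have h2 := hφn.comp (0:ℝ) hneg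
    have h3 : (φ ∘ fun y : ℝ => -y) = φ := funext fun y => heven y
    rw [h3] at h2
    have h4 := h1.unique h2
    -- h4 : -η 0 = -η 0 * -1
    nlinarith [h4]
  -- decay bounds
  have hφb : ∀ y, |φ y| ≤ 8*π*C^2 * (1+y^2)⁻¹ := fun y =>
    aux_conv_bound hC0 hgm hgm hgb hgb y
  have hηb : ∀ y, |η y| ≤ 8*π*C^2 * (1+y^2)⁻¹ := fun y =>
    aux_conv_bound hC0 hg'm hgm hg'b hgb y
  have hχb : ∀ y, |χ y| ≤ 8*π*C^2 * (1+y^2)⁻¹ := fun y =>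
    aux_conv_bound hC0 hg'm hg'm hg'b hg'b y
  set D := 8*π*C^2 with hDdef
  have hD0 : 0 ≤ D := by positivity
  have hφB : ∀ y, |φ y| ≤ D := fun y => (hφb y).trans (by nlinarith [hinvle y, hinv0 y])
  have hηB : ∀ y, |η y| ≤ D := fun y => (hηb y).trans (by nlinarith [hinvle y, hinv0 y])
  -- integrability of products
  have hprod : ∀ (f h : ℝ → ℝ), AEStronglyMeasurable (fun y => f y * h y) volume →
      (∀ y, |f y| ≤ D) → (∀ y, |h y| ≤ D * (1+y^2)⁻¹) → Integrable (fun y => f y * h y) := by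
    intro f h hm hf hh
    apply aux_integrable (K := D*D) hm
    intro y
    calc |f y * h y| = |f y| * |h y| := abs_mul _ _
      _ ≤ D * (D * (1+y^2)⁻¹) := mul_le_mul (hf y) (hh y) (abs_nonneg _) hD0
      _ = D*D * (1+y^2)⁻¹ := by ring
  have hφη_int : Integrable (fun y => φ y * η y) :=
    hprod φ η ((hφcont.mul hηcont).aestronglyMeasurable) hφB hηb
  have hφχ_int : Integrable (fun y => φ y * χ y) :=
    hprod φ χ (hφcont.aestronglyMeasurable.mul hχm) hφB hχb
  have hηη_int : Integrable (fun y => η y * η y) :=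
    hprod η η ((hηcont.mul hηcont).aestronglyMeasurable) hηB hηb
  have hφφ_int : Integrable (fun y => φ y * φ y) :=
    hprod φ φ ((hφcont.mul hφcont).aestronglyMeasurable) hφB hφb
  have hφ2_int : Integrable (fun y => φ y ^ 2) := by
    have : (fun y => φ y ^ 2) = fun y => φ y * φ y := funext fun y => sq (φ y)
    rw [this]; exact hφφ_int
  -- limits at infinity
  have htend_inv : Tendsto (fun y : ℝ => D * (D * (1+y^2)⁻¹)) atTop (𝓝 0) := by
    have h1 : Tendsto (fun y : ℝ => 1+y^2) atTop atTop :=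
      tendsto_atTop_add_const_left _ 1 (tendsto_pow_atTop two_ne_zero)
    have h2 : Tendsto (fun y : ℝ => (1+y^2)⁻¹) atTop (𝓝 0) := h1.inv_tendsto_atTop
    have h3 := (h2.const_mul D).const_mul D
    simpa using h3
  have hφη0 : Tendsto (fun y => φ y * η y) atTop (𝓝 0) := by
    apply squeeze_zero_norm _ htend_inv
    intro y
    rw [Real.norm_eq_abs, abs_mul]
    exact mul_le_mul (hφB y) (hηb y) (abs_nonneg _) hD0
  have hφ20 : Tendsto (fun y => φ y ^ 2) atTop (𝓝 0) := by
    apply squeeze_zero_norm _ htend_inv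
    intro y
    rw [Real.norm_eq_abs, pow_two, abs_mul]
    exact mul_le_mul (hφB y) (hφb y) (abs_nonneg _) hD0
  -- FTC identities
  have hFTC1 : ∫ y in Set.Ioi (0:ℝ), (-2) * (φ y * η y) = 0 - φ 0 ^ 2 := by
    apply integral_Ioi_of_hasDerivAt_of_tendsto' (f := fun y => φ y ^ 2)
    · intro y _
      have h := (hD1 y).pow 2
      refine h.congr_deriv ?_
      push_cast
      ring
    · have : (fun y => (-2 : ℝ) * (φ y * η y)) = fun y => (-2) * (φ y * η y) := rfl
      exact (hφη_int.const_mul (-2)).integrableOn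
    · exact hφ20
  have hIφη : ∫ y in Set.Ioi (0:ℝ), φ y * η y = ψ^2 / 2 := by
    have h := hFTC1
    rw [MeasureTheory.integral_const_mul, hφ0ψ] at h
    linarith
  have hFTC2 : ∫ y in Set.Ioi (0:ℝ), (φ y * χ y - η y * η y) = 0 - φ 0 * η 0 := by
    apply integral_Ioi_of_hasDerivAt_of_tendsto' (f := fun y => φ y * η y)
    · intro y _
      have h := (hD1 y).mul (hD2 y)
      refine h.congr_deriv ?_
      ring
    · exact (hφχ_int.sub hηη_int).integrableOn
    · exact hφη0
  have hBB : ∫ y in Set.Ioi (0:ℝ), φ y * χ y = ∫ y in Set.Ioi (0:ℝ), η y * η y := by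
    have h := hFTC2
    rw [hη0, mul_zero, integral_sub hφχ_int.integrableOn hηη_int.integrableOn] at h
    linarith
  set A := ∫ y in Set.Ioi (0:ℝ), φ y ^ 2 with hAdef
  set B' := ∫ y in Set.Ioi (0:ℝ), η y * η y with hB'def
  -- positivity of A
  have hφat0 : ∀ᶠ y in 𝓝 (0:ℝ), ψ/2 < φ y := by
    have hcont0 : ContinuousAt φ 0 := hφcont.continuousAt
    have ht : {z : ℝ | ψ/2 < z} ∈ 𝓝 (φ 0) := by
      rw [hφ0ψ]; exact lt_mem_nhds (by linarith)
    exact hcont0 ht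
  -- strict key inequality
  have hkey : ∀ c : ℝ, 0 < c → ψ^2 < c * A + B'/c := by
    intro c hc
    have hηat0 : ∀ᶠ y in 𝓝 (0:ℝ), |η y| < c*ψ/4 := by
      have hcont0 : ContinuousAt η 0 := hηcont.continuousAt
      have ht : {z : ℝ | |z| < c*ψ/4} ∈ 𝓝 (η 0) := by
        rw [hη0]
        have : (0:ℝ) < c*ψ/4 := by positivity
        have hopen : IsOpen {z : ℝ | |z| < c*ψ/4} := isOpen_lt (continuous_abs) continuous_const
        exact hopen.mem_nhds (by simpa using this)
      exact hcont0 ht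
    obtain ⟨δ, hδpos, hδ⟩ := Metric.eventually_nhds_iff.1 (hφat0.and hηat0)
    set δ' := δ/2 with hδ'def
    have hδ'pos : 0 < δ' := by positivity
    have hmem : ∀ y ∈ Set.Ioc 0 δ', ψ/2 < φ y ∧ |η y| < c*ψ/4 := by
      intro y hy
      apply hδ
      rw [Real.dist_eq, sub_zero, abs_of_pos hy.1]
      calc y ≤ δ' := hy.2
        _ < δ := by rw [hδ'def]; linarith
    have hc' : c ≠ 0 := hc.ne'
    set hfun : ℝ → ℝ := fun y => c * φ y^2 + (η y * η y)/c - 2*(φ y * η y) with hhdef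
    have hfun_eq : ∀ y, hfun y = (c * φ y - η y)^2 / c := by
      intro y
      rw [hhdef]
      field_simp
      ring
    have hfun_nonneg : ∀ y, 0 ≤ hfun y := by
      intro y
      rw [hfun_eq y]
      exact div_nonneg (sq_nonneg _) hc.le
    have hfun_lb : ∀ y ∈ Set.Ioc 0 δ', c*ψ^2/16 ≤ hfun y := by
      intro y hy
      obtain ⟨h1, h2⟩ := hmem y hy
      rw [hfun_eq y, le_div_iff₀ hc]
      have h3 : c*ψ/4 ≤ c * φ y - η y := by
        have hm1 := mul_lt_mul_of_pos_left h1 hc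
        linarith [(abs_lt.1 h2).2]
      have h4 := mul_self_le_mul_self (by positivity : (0:ℝ) ≤ c*ψ/4) h3
      calc c*ψ^2/16*c = (c*ψ/4)*(c*ψ/4) := by ring
        _ ≤ (c * φ y - η y)*(c * φ y - η y) := h4
        _ = (c * φ y - η y)^2 := (sq _).symm
    have hfun_int : Integrable hfun := by
      have h1 : Integrable (fun y => c * φ y^2) := hφ2_int.const_mul c
      have h2 : Integrable (fun y => (η y * η y)/c) := hηη_int.div_const c
      have h3 : Integrable (fun y => 2*(φ y * η y)) := hφη_int.const_mul 2
      exact (h1.add h2).sub h3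
    have hIoi_eq : ∫ y in Set.Ioi (0:ℝ), hfun y = c * A + B'/c - ψ^2 := by
      have e1 : (∫ y in Set.Ioi (0:ℝ), hfun y)
          = (∫ y in Set.Ioi (0:ℝ), (c * φ y^2 + (η y * η y)/c))
            - ∫ y in Set.Ioi (0:ℝ), 2*(φ y * η y) :=
        MeasureTheory.integral_sub
          (((hφ2_int.const_mul c).add (hηη_int.div_const c)).integrableOn)
          ((hφη_int.const_mul 2).integrableOn)
      have e2 : (∫ y in Set.Ioi (0:ℝ), (c * φ y^2 + (η y * η y)/c))
          = (∫ y in Set.Ioi (0:ℝ), c * φ y^2) + ∫ y in Set.Ioi (0:ℝ), (η y * η y)/c :=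
        MeasureTheory.integral_add ((hφ2_int.const_mul c).integrableOn)
          ((hηη_int.div_const c).integrableOn)
      have e3 : (∫ y in Set.Ioi (0:ℝ), c * φ y^2) = c * A := by
        rw [MeasureTheory.integral_const_mul]
      have e4 : (∫ y in Set.Ioi (0:ℝ), (η y * η y)/c) = B'/c := integral_div c _
      have e5 : (∫ y in Set.Ioi (0:ℝ), 2*(φ y * η y)) = 2 * (ψ^2/2) := by
        rw [MeasureTheory.integral_const_mul, hIφη]
      rw [e1, e2, e3, e4, e5]
      ring
    have hlower : (c*ψ^2/16) * δ' ≤ ∫ y in Set.Ioi (0:ℝ), hfun y := by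
      have hs1 : ∫ y in Set.Ioc (0:ℝ) δ', hfun y ≤ ∫ y in Set.Ioi (0:ℝ), hfun y := by
        apply setIntegral_mono_set hfun_int.integrableOn
          (Eventually.of_forall fun y => hfun_nonneg y)
        exact (Set.Ioc_subset_Ioi_self).eventuallyLE
      have hs2 : (c*ψ^2/16) * δ' ≤ ∫ y in Set.Ioc (0:ℝ) δ', hfun y := by
        have hconst : ∫ _y in Set.Ioc (0:ℝ) δ', (c*ψ^2/16) = (c*ψ^2/16) * δ' := by
          rw [setIntegral_const, Real.volume_real_Ioc, smul_eq_mul]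
          rw [max_eq_left (by linarith)]
          ring
        rw [← hconst]
        apply setIntegral_mono_on
          (integrableOn_const measure_Ioc_lt_top.ne)
          hfun_int.integrableOn measurableSet_Ioc
        exact hfun_lb
      linarith
    have hposint : 0 < (c*ψ^2/16) * δ' := by positivity
    have := hIoi_eq ▸ hlower
    linarith
  have hA0 : 0 < A := by
    obtain ⟨δ, hδpos, hδ⟩ := Metric.eventually_nhds_iff.1 hφat0
    have hδ'pos : 0 < δ/2 := by positivity
    have hs1 : ∫ y in Set.Ioc (0:ℝ) (δ/2), φ y ^ 2 ≤ A :=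
      setIntegral_mono_set hφ2_int.integrableOn (Eventually.of_forall fun y => sq_nonneg _)
        (Set.Ioc_subset_Ioi_self).eventuallyLE
    have hs2 : (ψ/2)^2 * (δ/2) ≤ ∫ y in Set.Ioc (0:ℝ) (δ/2), φ y ^ 2 := by
      have hconst : ∫ _y in Set.Ioc (0:ℝ) (δ/2), ((ψ/2)^2) = (ψ/2)^2 * (δ/2) := by
        rw [setIntegral_const, Real.volume_real_Ioc, smul_eq_mul,
          max_eq_left (by linarith)]
        ring
      rw [← hconst]
      apply setIntegral_mono_on (integrableOn_const measure_Ioc_lt_top.ne)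
        hφ2_int.integrableOn measurableSet_Ioc
      intro y hy
      have h1 : ψ/2 < φ y := hδ (by
        rw [Real.dist_eq, sub_zero, abs_of_pos hy.1]
        calc y ≤ δ/2 := hy.2
          _ < δ := by linarith)
      nlinarith
    nlinarith [mul_pos (by positivity : (0:ℝ) < (ψ/2)^2) hδ'pos]
  have hB'0 : 0 ≤ B' := setIntegral_nonneg measurableSet_Ioi (fun y _ => mul_self_nonneg _)
  show 8 * σ * Real.sqrt Υ <
    8 / ψ^2 * (A * θ * σ^2 + (∫ y in Set.Ioi (0:ℝ), φ y * χ y) * Υ / θ)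
  rw [hBB]
  clear hψdef hφdef hηdef hχdef hAdef hB'def hφ0ψ heven hη0 hφb hηb hχb hφB hηB hφη_int
    hφχ_int hηη_int hφφ_int hφ2_int hφη0 hφ20 hFTC1 hIφη hFTC2 hBB hφat0 hD1 hD2 hφcont
    hηcont hχm hprod hDdef hD0 htend_inv
  clear_value ψ A B'
  clear φ η χ
  have hB'pos : 0 < B' := by
    rcases hB'0.lt_or_eq with h | h
    · exact h
    · exfalso
      have hkey2 := hkey (ψ^2/(2*A)) (div_pos (pow_pos hψpos 2) (by linarith))
      rw [← h] at hkey2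
      have hA' : A ≠ 0 := hA0.ne'
      have e1 : ψ^2/(2*A) * A = ψ^2/2 := by field_simp
      rw [e1] at hkey2
      have e2 : (0:ℝ) / (ψ^2/(2*A)) = 0 := zero_div _
      rw [e2] at hkey2
      nlinarith
  set a := Real.sqrt A with hadef
  set b := Real.sqrt B' with hbdef
  have ha0 : 0 < a := Real.sqrt_pos.2 hA0
  have hb0 : 0 < b := Real.sqrt_pos.2 hB'pos
  have ha2 : a^2 = A := Real.sq_sqrt hA0.le
  have hb2 : b^2 = B' := Real.sq_sqrt hB'pos.le
  have hmain : ψ^2 < 2*a*b := by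
    have hsq : Real.sqrt (B'/A) = b/a := by
      rw [show B'/A = (b/a)^2 by rw [div_pow, ha2, hb2], Real.sqrt_sq (by positivity)]
    have h := hkey (Real.sqrt (B'/A)) (by rw [hsq]; positivity)
    rw [hsq] at h
    have e : b/a * A + B'/(b/a) = 2*a*b := by
      rw [← ha2, ← hb2]
      field_simp
      ring
    linarith [e ▸ h]
  -- final algebra
  set rθ := Real.sqrt θ with hrθdef
  set rΥ := Real.sqrt Υ with hrΥdef
  have hrθ0 : 0 < rθ := Real.sqrt_pos.2 hθ
  have hrΥ0 : 0 < rΥ := Real.sqrt_pos.2 hΥ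
  have hrθ2 : rθ^2 = θ := Real.sq_sqrt hθ.le
  have hrΥ2 : rΥ^2 = Υ := Real.sq_sqrt hΥ.le
  have hXlb : ψ^2 * (σ * rΥ) < A * θ * σ^2 + B' * Υ / θ := by
    have h2 : 2*(a*σ*θ)*(b*rΥ) ≤ A*θ^2*σ^2 + B'*Υ := by
      rw [← ha2, ← hb2, ← hrΥ2]
      nlinarith [sq_nonneg (a*σ*θ - b*rΥ)]
    have h3 : (A * θ * σ^2 + B' * Υ / θ) * θ = A*θ^2*σ^2 + B'*Υ := by
      field_simp
    have h4 : 2*a*b*(σ*rΥ) ≤ A * θ * σ^2 + B' * Υ / θ := by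
      apply le_of_mul_le_mul_right _ hθ
      rw [h3]
      nlinarith [h2]
    have h5 : ψ^2 * (σ * rΥ) < 2*a*b*(σ*rΥ) := by
      have := mul_pos hσ hrΥ0
      nlinarith
    linarith
  calc 8 * σ * rΥ = 8 / ψ^2 * (ψ^2 * (σ * rΥ)) := by
        field_simp
    _ < 8 / ψ^2 * (A * θ * σ^2 + B' * Υ / θ) :=
        mul_lt_mul_of_pos_left hXlb (by positivity)
end

section
/- For every y ∈ ℝ, ∫_{−∞}^∞ e^{−|x−y|} e^{−|x|} dx = (1 + |y|) e^{−|y|}. In other words, for the weight function g(x) = e^{−|x|}, the autocorrelation function φ_{g,g}(y) = ∫_{−∞}^∞ g(x−y)g(x) dx equals the optimal flat-top realized-kernel function K_opt(y) = (1+|y|)e^{−|y|}. -/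
open Real MeasureTheory Set

lemma aux_integrable_s9 (y : ℝ) :
    Integrable (fun x : ℝ => Real.exp (-|x - y|) * Real.exp (-|x|)) := by
  have hleft : IntegrableOn (fun x : ℝ => Real.exp (-|x|)) (Iic 0) := by
    refine (integrableOn_exp_Iic 0).congr_fun (fun x hx => ?_) measurableSet_Iic
    simp [abs_of_nonpos (mem_Iic.mp hx)]
  have hright : IntegrableOn (fun x : ℝ => Real.exp (-|x|)) (Ioi 0) := by
    refine (exp_neg_integrableOn_Ioi 0 one_pos).congr_fun (fun x hx => ?_) measurableSet_Ioi
    simp [abs_of_pos (mem_Ioi.mp hx)]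
  have habs : Integrable (fun x : ℝ => Real.exp (-|x|)) := by
    have := hleft.union hright
    rwa [Iic_union_Ioi, integrableOn_univ] at this
  refine habs.mono' ?_ ?_
  · exact (Continuous.mul (by continuity) (by continuity)).aestronglyMeasurable
  · filter_upwards with x
    rw [norm_mul, norm_of_nonneg (exp_pos _).le, norm_of_nonneg (exp_pos _).le]
    nth_rewrite 2 [show Real.exp (-|x|) = 1 * Real.exp (-|x|) by ring]
    gcongr
    exact exp_le_one_iff.mpr (neg_nonpos.mpr (abs_nonneg _))

lemma aux_main {y : ℝ} (hy : 0 ≤ y) :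
    (∫ x : ℝ, Real.exp (-|x - y|) * Real.exp (-|x|)) = (1 + y) * Real.exp (-y) := by
  have hint := aux_integrable_s9 y
  have h2 : ∀ c : ℝ, (∫ x : ℝ in Ioi c, Real.exp (-(2 * x))) = 2⁻¹ * Real.exp (-(2 * c)) := by
    intro c
    have := integral_comp_mul_left_Ioi (fun t : ℝ => Real.exp (-t)) c (two_pos (α := ℝ))
    simpa [smul_eq_mul, integral_exp_neg_Ioi, integral_exp_Iic] using this
  have hIic : (∫ x : ℝ in Iic 0, Real.exp (-|x - y|) * Real.exp (-|x|))
      = Real.exp (-y) / 2 := by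
    rw [setIntegral_congr_fun measurableSet_Iic
      (g := fun x : ℝ => Real.exp (-y) * Real.exp (2 * x)) ?_]
    · rw [integral_const_mul]
      have : (∫ x : ℝ in Iic 0, Real.exp (2 * x))
          = ∫ x : ℝ in Ioi (0:ℝ), Real.exp (-(2 * x)) := by
        rw [show (0:ℝ) = -(0:ℝ) by norm_num, ← integral_comp_neg_Ioi]
        norm_num
      rw [this, h2]
      norm_num
      ring
    · intro x hx
      dsimp only
      have hx0 : x ≤ 0 := hx
      rw [abs_of_nonpos hx0, abs_of_nonpos (by linarith), ← Real.exp_add, ← Real.exp_add]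
      ring_nf
  have hIoc : (∫ x : ℝ in Ioc 0 y, Real.exp (-|x - y|) * Real.exp (-|x|))
      = y * Real.exp (-y) := by
    rw [setIntegral_congr_fun measurableSet_Ioc (g := fun _ : ℝ => Real.exp (-y)) ?_]
    · rw [setIntegral_const, measureReal_def, Real.volume_Ioc, smul_eq_mul]
      rw [ENNReal.toReal_ofReal (by linarith)]
      ring
    · intro x hx
      dsimp only
      rw [abs_of_nonpos (by linarith [hx.2] : x - y ≤ 0), abs_of_pos hx.1, ← Real.exp_add]
      ring_nf
  have hIoi : (∫ x : ℝ in Ioi y, Real.exp (-|x - y|) * Real.exp (-|x|))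
      = Real.exp (-y) / 2 := by
    rw [setIntegral_congr_fun measurableSet_Ioi
      (g := fun x : ℝ => Real.exp y * Real.exp (-(2 * x))) ?_]
    · rw [integral_const_mul, h2, mul_left_comm, ← Real.exp_add]
      ring_nf
    · intro x hx
      dsimp only
      have hxy : y < x := hx
      rw [abs_of_nonneg (by linarith : 0 ≤ x - y), abs_of_pos (by linarith), ← Real.exp_add,
        ← Real.exp_add]
      ring_nf
  have hsplit2 : (∫ x : ℝ in Ioi (0:ℝ), Real.exp (-|x - y|) * Real.exp (-|x|))
      = (∫ x : ℝ in Ioc 0 y, Real.exp (-|x - y|) * Real.exp (-|x|))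
        + ∫ x : ℝ in Ioi y, Real.exp (-|x - y|) * Real.exp (-|x|) := by
    rw [← setIntegral_union (Ioc_disjoint_Ioi le_rfl) measurableSet_Ioi
      hint.integrableOn hint.integrableOn, Ioc_union_Ioi_eq_Ioi hy]
  calc (∫ x : ℝ, Real.exp (-|x - y|) * Real.exp (-|x|))
      = (∫ x : ℝ in Iic 0, Real.exp (-|x - y|) * Real.exp (-|x|))
        + ∫ x : ℝ in Ioi (0:ℝ), Real.exp (-|x - y|) * Real.exp (-|x|) :=
        (intervalIntegral.integral_Iic_add_Ioi hint.integrableOn hint.integrableOn).symm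
    _ = (1 + y) * Real.exp (-y) := by rw [hIic, hsplit2, hIoc, hIoi]; ring

/-- For the double exponential weight function `g(x) = e^{-|x|}`, the autocorrelation
function `φ_{g,g}(y) = ∫ g(x-y) g(x) dx` equals the optimal flat-top realized-kernel
function `K_opt(y) = (1+|y|) e^{-|y|}`. -/
theorem stmt9 (y : ℝ) :
    (∫ x : ℝ, Real.exp (-|x - y|) * Real.exp (-|x|)) = (1 + |y|) * Real.exp (-|y|) := by
  rcases le_or_gt 0 y with hy | hy
  · rw [abs_of_nonneg hy]; exact aux_main hy
  · rw [abs_of_neg hy]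
    have := integral_add_right_eq_self (μ := volume)
      (fun x : ℝ => Real.exp (-|x - y|) * Real.exp (-|x|)) y
    rw [← this]
    have heq : (fun x : ℝ => Real.exp (-|x + y - y|) * Real.exp (-|x + y|))
        = fun x : ℝ => Real.exp (-|x - (-y)|) * Real.exp (-|x|) := by
      funext x
      rw [mul_comm]
      congr 2 <;> ring_nf
    simp only [heq]
    exact aux_main (by linarith)
end

section
/- Let g(x) = e^{−|x|} with derivative (defined a.e. and used in all integrals) g'(x) = −sgn(x) e^{−|x|}. Set ψ₂ = ∫_{−∞}^∞ g(x)² dx, φ_{u,v}(y) = ∫_{−∞}^∞ u(x−y)v(x) dx, Φ₂₂ = ∫₀^∞ φ_{g,g}(y)² dy, Φ₁₂ = ∫₀^∞ φ_{g,g}(y)φ_{g',g'}(y) dy, Φ₁₁ = ∫₀^∞ φ_{g',g'}(y)² dy. Then ψ₂ = 1, Φ₂₂ = 5/4, Φ₁₂ = 1/4, Φ₁₁ = 1/4, and for all σ > 0, Υ > 0 the function θ ↦ (4/ψ₂²)(Φ₂₂ θ σ⁴ + 2Φ₁₂ σ²Υ/θ + Φ₁₁ Υ²/θ³) on (0,∞)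 attains its minimum value 8σ³√Υ at θ = √Υ/σ. In particular, the modulated realized covariance estimator with the double exponential weight function and this oracle tuning parameter achieves the parametric efficiency bound 8σ³√Υ for its asymptotic variance. -/
open Real Filter MeasureTheory

/-- The double exponential weight function `g(x) = e^{-|x|}`. -/
noncomputable def gDE (x : ℝ) : ℝ := Real.exp (-|x|)

/-- Its derivative (defined a.e.): `g'(x) = -sgn(x) e^{-|x|}`. -/
noncomputable def gDE' (x : ℝ) : ℝ := -Real.sign x * Real.exp (-|x|)

/-- `φ_{u,v}(y) = ∫ u(x-y) v(x) dx`. -/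
noncomputable def phiAC (u v : ℝ → ℝ) (y : ℝ) : ℝ := ∫ x : ℝ, u (x - y) * v x

open Set

lemma measurable_realSign : Measurable Real.sign := by
  have : Real.sign = fun r : ℝ => if r < 0 then (-1 : ℝ) else if 0 < r then 1 else 0 := by
    funext r; rfl
  rw [this]
  exact Measurable.ite measurableSet_Iio measurable_const
    (Measurable.ite measurableSet_Ioi measurable_const measurable_const)

lemma integrable_exp_neg_abs : Integrable (fun x : ℝ => Real.exp (-|x|)) := by
  have h1 : IntegrableOn (fun x : ℝ => Real.exp (-|x|)) (Iic (0:ℝ)) := by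
    refine (integrableOn_exp_Iic 0).congr_fun (fun x hx => ?_) measurableSet_Iic
    rw [abs_of_nonpos (hx : x ≤ (0:ℝ)), neg_neg]
  have h2 : IntegrableOn (fun x : ℝ => Real.exp (-|x|)) (Ioi (0:ℝ)) := by
    refine (exp_neg_integrableOn_Ioi 0 one_pos).congr_fun (fun x hx => ?_) measurableSet_Ioi
    rw [abs_of_pos (hx : (0:ℝ) < x)]; simp only [neg_one_mul]
  have := h1.union h2
  rw [Iic_union_Ioi] at this
  exact integrableOn_univ.mp this

lemma int_exp_Ioi (a : ℝ) {r : ℝ} (hr : 0 < r) :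
    ∫ x in Ioi a, Real.exp (-(r * x)) = Real.exp (-(r * a)) / r := by
  have hd : ∀ x ∈ Ici a,
      HasDerivAt (fun x => -Real.exp (-(r * x)) / r) (Real.exp (-(r * x))) x := by
    intro x _
    have h1 : HasDerivAt (fun x : ℝ => -(r * x)) (-r) x := by
      simpa using ((hasDerivAt_id x).const_mul r).fun_neg
    have := (h1.exp.fun_neg).div_const r
    rwa [mul_neg, neg_neg, mul_div_assoc, div_self hr.ne', mul_one] at this
  have hi : IntegrableOn (fun x => Real.exp (-(r * x))) (Ioi a) := by
    refine (exp_neg_integrableOn_Ioi a hr).congr_fun (fun x _ => ?_) measurableSet_Ioi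
    simp only [neg_mul]
  have ht : Tendsto (fun x => -Real.exp (-(r * x)) / r) atTop (nhds 0) := by
    have h2 : Tendsto (fun x : ℝ => -(r * x)) atTop atBot := by
      simpa [neg_mul] using (tendsto_id.const_mul_atTop_of_neg (neg_neg_iff_pos.2 hr) :
        Tendsto (fun x : ℝ => -r * x) atTop atBot)
    have := ((Real.tendsto_exp_atBot.comp h2).neg).div_const r
    simpa using this
  have := integral_Ioi_of_hasDerivAt_of_tendsto' hd hi ht
  rw [this]
  ring

lemma int_exp_Iic (a : ℝ) {r : ℝ} (hr : 0 < r) :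
    ∫ x in Iic a, Real.exp (r * x) = Real.exp (r * a) / r := by
  have := integral_comp_neg_Iic a (fun x => Real.exp (-(r * x)))
  simp only [mul_neg, neg_neg] at this
  rw [this, int_exp_Ioi (-a) hr]
  simp

lemma integrableOn_pow_exp (n : ℕ) :
    IntegrableOn (fun x : ℝ => x ^ n * Real.exp (-(2 * x))) (Ioi 0) := by
  refine Integrable.mono (Real.GammaIntegral_convergent (s := (n : ℝ) + 1) (by positivity))
    ?_ ?_
  · exact ((measurable_id.pow_const n).mul
      ((measurable_const.mul measurable_id).neg.exp)).aestronglyMeasurable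
  · filter_upwards [ae_restrict_mem measurableSet_Ioi] with x hx
    have hx0 : (0:ℝ) < x := hx
    have h1 : x ^ ((n : ℝ) + 1 - 1) = x ^ n := by
      rw [show (n : ℝ) + 1 - 1 = (n : ℝ) by ring, Real.rpow_natCast]
    rw [Real.norm_eq_abs, Real.norm_eq_abs, h1, abs_mul, abs_mul,
      abs_of_pos (Real.exp_pos _), abs_of_pos (Real.exp_pos _),
      abs_of_pos (pow_pos hx0 n), mul_comm (Real.exp (-x))]
    have : Real.exp (-(2 * x)) ≤ Real.exp (-x) := by
      apply Real.exp_le_exp.2; linarith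
    exact mul_le_mul_of_nonneg_left this (pow_pos hx0 n).le

lemma int_pow_exp (n : ℕ) :
    ∫ x in Ioi (0:ℝ), x ^ n * Real.exp (-(2 * x)) = (Nat.factorial n : ℝ) / 2 ^ (n + 1) := by
  have h := Real.integral_rpow_mul_exp_neg_mul_Ioi (a := (n : ℝ) + 1) (r := 2)
    (by positivity) two_pos
  rw [show ((n:ℝ) + 1 - 1) = (n : ℝ) by ring] at h
  have h2 : ∫ x in Ioi (0:ℝ), x ^ n * Real.exp (-(2 * x))
      = ∫ t in Ioi (0:ℝ), t ^ ((n:ℝ)) * Real.exp (-(2 * t)) := by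
    refine setIntegral_congr_fun measurableSet_Ioi (fun x hx => ?_)
    rw [Real.rpow_natCast]
  rw [h2, h, Real.Gamma_nat_eq_factorial n,
    show ((n:ℝ) + 1) = ((n + 1 : ℕ) : ℝ) by push_cast; ring,
    Real.rpow_natCast, div_pow, one_pow]
  ring

lemma int_quad_exp (a b c : ℝ) :
    ∫ y in Ioi (0:ℝ), (a * y ^ 2 + b * y + c) * Real.exp (-(2 * y))
      = a / 4 + b / 4 + c / 2 := by
  have e : ∀ y : ℝ, (a * y ^ 2 + b * y + c) * Real.exp (-(2 * y))
      = a * (y ^ 2 * Real.exp (-(2 * y)))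
        + (b * (y ^ 1 * Real.exp (-(2 * y))) + c * (y ^ 0 * Real.exp (-(2 * y)))) := by
    intro y; ring
  have hA : Integrable (fun y : ℝ => a * (y ^ 2 * Real.exp (-(2 * y))))
      (volume.restrict (Ioi 0)) := (integrableOn_pow_exp 2).const_mul a
  have hB : Integrable (fun y : ℝ => b * (y ^ 1 * Real.exp (-(2 * y))))
      (volume.restrict (Ioi 0)) := (integrableOn_pow_exp 1).const_mul b
  have hC : Integrable (fun y : ℝ => c * (y ^ 0 * Real.exp (-(2 * y))))
      (volume.restrict (Ioi 0)) := (integrableOn_pow_exp 0).const_mul c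
  have hBC : Integrable (fun y : ℝ => b * (y ^ 1 * Real.exp (-(2 * y)))
      + c * (y ^ 0 * Real.exp (-(2 * y)))) (volume.restrict (Ioi 0)) := hB.add hC
  simp_rw [e]
  rw [integral_add hA hBC, integral_add hB hC,
    integral_const_mul, integral_const_mul, integral_const_mul,
    int_pow_exp, int_pow_exp, int_pow_exp]
  norm_num [Nat.factorial]
  ring

lemma gDE_meas : Measurable gDE := measurable_abs.neg.exp

lemma gDE'_meas : Measurable gDE' := (measurable_realSign.neg).mul measurable_abs.neg.exp

lemma gDE_abs_le (x : ℝ) : |gDE x| ≤ Real.exp (-|x|) := by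
  unfold gDE; rw [abs_of_pos (Real.exp_pos _)]

lemma gDE_abs_le_one (x : ℝ) : |gDE x| ≤ 1 := by
  refine (gDE_abs_le x).trans ?_
  exact Real.exp_le_one_iff.2 (neg_nonpos.2 (abs_nonneg _))

lemma gDE'_abs_le (x : ℝ) : |gDE' x| ≤ Real.exp (-|x|) := by
  unfold gDE'
  rw [abs_mul, abs_neg, abs_of_pos (Real.exp_pos _)]
  have h : |Real.sign x| ≤ 1 := by
    rcases Real.sign_apply_eq x with h | h | h <;> rw [h] <;> norm_num
  calc |Real.sign x| * Real.exp (-|x|) ≤ 1 * Real.exp (-|x|) :=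
        mul_le_mul_of_nonneg_right h (Real.exp_pos _).le
    _ = Real.exp (-|x|) := one_mul _

lemma gDE'_abs_le_one (x : ℝ) : |gDE' x| ≤ 1 :=
  (gDE'_abs_le x).trans (Real.exp_le_one_iff.2 (neg_nonpos.2 (abs_nonneg _)))

lemma integrable_shift_mul {u v : ℝ → ℝ} (hu : Measurable u) (hv : Measurable v)
    (hub : ∀ x, |u x| ≤ 1) (hvb : ∀ x, |v x| ≤ Real.exp (-|x|)) (y : ℝ) :
    Integrable (fun x => u (x - y) * v x) := by
  refine integrable_exp_neg_abs.mono
    (((hu.comp (measurable_id.sub measurable_const)).mul hv).aestronglyMeasurable) ?_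
  filter_upwards with x
  rw [Real.norm_eq_abs, Real.norm_eq_abs, abs_mul, abs_of_pos (Real.exp_pos _)]
  calc |u (x - y)| * |v x| ≤ 1 * Real.exp (-|x|) :=
        mul_le_mul (hub _) (hvb _) (abs_nonneg _) one_pos.le
    _ = Real.exp (-|x|) := one_mul _

lemma exp_mul_exp_eq (A B C : ℝ) (h : A + B = C) :
    Real.exp A * Real.exp B = Real.exp C := by rw [← Real.exp_add, h]

lemma phi_gg {y : ℝ} (hy : 0 < y) : phiAC gDE gDE y = (1 + y) * Real.exp (-y) := by
  have hint : Integrable (fun x => gDE (x - y) * gDE x) :=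
    integrable_shift_mul gDE_meas gDE_meas gDE_abs_le_one gDE_abs_le y
  unfold phiAC
  rw [← intervalIntegral.integral_Iio_add_Ici hint.integrableOn hint.integrableOn,
    integral_Ici_eq_integral_Ioi,
    show Ioi (0:ℝ) = Ioo 0 y ∪ Ici y from (Ioo_union_Ici_eq_Ioi hy).symm,
    setIntegral_union (Set.disjoint_left.mpr (fun x hx hx' => hx.2.not_ge hx'))
      measurableSet_Ici hint.integrableOn hint.integrableOn,
    integral_Ici_eq_integral_Ioi]
  have p1 : ∫ x in Iio (0:ℝ), gDE (x - y) * gDE x = Real.exp (-y) / 2 := by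
    have e1 : ∀ x ∈ Iio (0:ℝ), gDE (x - y) * gDE x = Real.exp (-y) * Real.exp (2 * x) := by
      intro x hx
      have hx' : x < 0 := hx
      unfold gDE
      rw [abs_of_nonpos (by linarith : x - y ≤ 0), abs_of_nonpos hx'.le,
        exp_mul_exp_eq _ _ (2 * x - y) (by ring), exp_mul_exp_eq _ _ (2 * x - y) (by ring)]
    rw [setIntegral_congr_fun measurableSet_Iio e1, integral_const_mul,
      ← integral_Iic_eq_integral_Iio, int_exp_Iic 0 two_pos,
      show (2:ℝ) * 0 = 0 by ring, Real.exp_zero]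
    ring
  have p2 : ∫ x in Ioo (0:ℝ) y, gDE (x - y) * gDE x = y * Real.exp (-y) := by
    have e2 : ∀ x ∈ Ioo (0:ℝ) y, gDE (x - y) * gDE x = Real.exp (-y) := by
      intro x hx
      unfold gDE
      rw [abs_of_nonpos (by linarith [hx.2] : x - y ≤ 0), abs_of_pos hx.1,
        exp_mul_exp_eq _ _ (-y) (by ring)]
    rw [setIntegral_congr_fun measurableSet_Ioo e2, setIntegral_const, Real.volume_real_Ioo_of_le (by linarith : (0:ℝ) ≤ y),
      smul_eq_mul]
    ring
  have p3 : ∫ x in Ioi y, gDE (x - y) * gDE x = Real.exp (-y) / 2 := by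
    have e3 : ∀ x ∈ Ioi y, gDE (x - y) * gDE x = Real.exp y * Real.exp (-(2 * x)) := by
      intro x hx
      have hx' : y < x := hx
      unfold gDE
      rw [abs_of_nonneg (by linarith : (0:ℝ) ≤ x - y), abs_of_pos (by linarith : (0:ℝ) < x),
        exp_mul_exp_eq _ _ (y - 2 * x) (by ring), exp_mul_exp_eq _ _ (y - 2 * x) (by ring)]
    rw [setIntegral_congr_fun measurableSet_Ioi e3, integral_const_mul, int_exp_Ioi y two_pos,
      show Real.exp y * (Real.exp (-(2 * y)) / 2) = Real.exp y * Real.exp (-(2 * y)) / 2 by ring,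
      exp_mul_exp_eq _ _ (-y) (by ring)]
  rw [p1, p2, p3]; ring

lemma phi_g'g' {y : ℝ} (hy : 0 < y) : phiAC gDE' gDE' y = (1 - y) * Real.exp (-y) := by
  have hint : Integrable (fun x => gDE' (x - y) * gDE' x) :=
    integrable_shift_mul gDE'_meas gDE'_meas gDE'_abs_le_one gDE'_abs_le y
  unfold phiAC
  rw [← intervalIntegral.integral_Iio_add_Ici hint.integrableOn hint.integrableOn,
    integral_Ici_eq_integral_Ioi,
    show Ioi (0:ℝ) = Ioo 0 y ∪ Ici y from (Ioo_union_Ici_eq_Ioi hy).symm,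
    setIntegral_union (Set.disjoint_left.mpr (fun x hx hx' => hx.2.not_ge hx'))
      measurableSet_Ici hint.integrableOn hint.integrableOn,
    integral_Ici_eq_integral_Ioi]
  have p1 : ∫ x in Iio (0:ℝ), gDE' (x - y) * gDE' x = Real.exp (-y) / 2 := by
    have e1 : ∀ x ∈ Iio (0:ℝ), gDE' (x - y) * gDE' x = Real.exp (-y) * Real.exp (2 * x) := by
      intro x hx
      have hx' : x < 0 := hx
      unfold gDE'
      rw [Real.sign_of_neg (by linarith : x - y < 0), Real.sign_of_neg hx',
        abs_of_nonpos (by linarith : x - y ≤ 0), abs_of_nonpos hx'.le]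
      simp only [neg_neg, one_mul]
      rw [exp_mul_exp_eq _ _ (2 * x - y) (by ring), exp_mul_exp_eq _ _ (2 * x - y) (by ring)]
    rw [setIntegral_congr_fun measurableSet_Iio e1, integral_const_mul,
      ← integral_Iic_eq_integral_Iio, int_exp_Iic 0 two_pos,
      show (2:ℝ) * 0 = 0 by ring, Real.exp_zero]
    ring
  have p2 : ∫ x in Ioo (0:ℝ) y, gDE' (x - y) * gDE' x = -(y * Real.exp (-y)) := by
    have e2 : ∀ x ∈ Ioo (0:ℝ) y, gDE' (x - y) * gDE' x = -Real.exp (-y) := by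
      intro x hx
      unfold gDE'
      rw [Real.sign_of_neg (by linarith [hx.2] : x - y < 0), Real.sign_of_pos hx.1,
        abs_of_nonpos (by linarith [hx.2] : x - y ≤ 0), abs_of_pos hx.1]
      simp only [neg_neg, one_mul, neg_one_mul]
      rw [show Real.exp (x - y) * -Real.exp (-x) = -(Real.exp (x - y) * Real.exp (-x)) by
        ring, exp_mul_exp_eq _ _ (-y) (by ring)]
    rw [setIntegral_congr_fun measurableSet_Ioo e2, setIntegral_const, Real.volume_real_Ioo_of_le (by linarith : (0:ℝ) ≤ y),
      smul_eq_mul]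
    ring
  have p3 : ∫ x in Ioi y, gDE' (x - y) * gDE' x = Real.exp (-y) / 2 := by
    have e3 : ∀ x ∈ Ioi y, gDE' (x - y) * gDE' x = Real.exp y * Real.exp (-(2 * x)) := by
      intro x hx
      have hx' : y < x := hx
      unfold gDE'
      rw [Real.sign_of_pos (by linarith : (0:ℝ) < x - y), Real.sign_of_pos (by linarith : (0:ℝ) < x),
        abs_of_nonneg (by linarith : (0:ℝ) ≤ x - y), abs_of_pos (by linarith : (0:ℝ) < x)]
      rw [show -(1:ℝ) * Real.exp (-(x - y)) * (-1 * Real.exp (-x))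
        = Real.exp (-(x - y)) * Real.exp (-x) by ring,
        exp_mul_exp_eq _ _ (y - 2 * x) (by ring), exp_mul_exp_eq _ _ (y - 2 * x) (by ring)]
    rw [setIntegral_congr_fun measurableSet_Ioi e3, integral_const_mul, int_exp_Ioi y two_pos,
      show Real.exp y * (Real.exp (-(2 * y)) / 2) = Real.exp y * Real.exp (-(2 * y)) / 2 by ring,
      exp_mul_exp_eq _ _ (-y) (by ring)]
  rw [p1, p2, p3]; ring

lemma exp_neg_sq (y : ℝ) : Real.exp (-y) ^ 2 = Real.exp (-(2 * y)) := by
  rw [sq, exp_mul_exp_eq _ _ (-(2 * y)) (by ring)]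

lemma psi2_eq : (∫ x : ℝ, gDE x ^ 2) = 1 := by
  have hint : Integrable (fun x : ℝ => gDE x ^ 2) := by
    refine integrable_exp_neg_abs.mono ((gDE_meas.pow_const 2).aestronglyMeasurable) ?_
    filter_upwards with x
    rw [Real.norm_eq_abs, Real.norm_eq_abs, abs_of_pos (Real.exp_pos _), abs_pow]
    calc |gDE x| ^ 2 = |gDE x| * |gDE x| := sq _
      _ ≤ 1 * Real.exp (-|x|) :=
          mul_le_mul (gDE_abs_le_one x) (gDE_abs_le x) (abs_nonneg _) one_pos.le
      _ = Real.exp (-|x|) := one_mul _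
  rw [← intervalIntegral.integral_Iic_add_Ioi hint.integrableOn hint.integrableOn]
  have p1 : ∫ x in Iic (0:ℝ), gDE x ^ 2 = 1 / 2 := by
    have e1 : ∀ x ∈ Iic (0:ℝ), gDE x ^ 2 = Real.exp (2 * x) := by
      intro x hx
      unfold gDE
      rw [abs_of_nonpos (hx : x ≤ (0:ℝ)), neg_neg, sq, exp_mul_exp_eq _ _ (2 * x) (by ring)]
    rw [setIntegral_congr_fun measurableSet_Iic e1, int_exp_Iic 0 two_pos]
    norm_num
  have p2 : ∫ x in Ioi (0:ℝ), gDE x ^ 2 = 1 / 2 := by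
    have e2 : ∀ x ∈ Ioi (0:ℝ), gDE x ^ 2 = Real.exp (-(2 * x)) := by
      intro x hx
      unfold gDE
      rw [abs_of_pos (hx : (0:ℝ) < x), exp_neg_sq]
    rw [setIntegral_congr_fun measurableSet_Ioi e2, int_exp_Ioi 0 two_pos]
    norm_num
  rw [p1, p2]; norm_num

lemma Phi22_eq : (∫ y in Ioi (0:ℝ), phiAC gDE gDE y ^ 2) = 5 / 4 := by
  have e : ∀ y ∈ Ioi (0:ℝ), phiAC gDE gDE y ^ 2
      = (1 * y ^ 2 + 2 * y + 1) * Real.exp (-(2 * y)) := by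
    intro y hy
    rw [phi_gg (hy : (0:ℝ) < y), mul_pow, exp_neg_sq]; ring
  rw [setIntegral_congr_fun measurableSet_Ioi e, int_quad_exp]
  norm_num

lemma Phi12_eq : (∫ y in Ioi (0:ℝ), phiAC gDE gDE y * phiAC gDE' gDE' y) = 1 / 4 := by
  have e : ∀ y ∈ Ioi (0:ℝ), phiAC gDE gDE y * phiAC gDE' gDE' y
      = ((-1) * y ^ 2 + 0 * y + 1) * Real.exp (-(2 * y)) := by
    intro y hy
    rw [phi_gg (hy : (0:ℝ) < y), phi_g'g' (hy : (0:ℝ) < y),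
      show (1 + y) * Real.exp (-y) * ((1 - y) * Real.exp (-y))
        = (1 + y) * (1 - y) * Real.exp (-y) ^ 2 by ring, exp_neg_sq]
    ring
  rw [setIntegral_congr_fun measurableSet_Ioi e, int_quad_exp]
  norm_num

lemma Phi11_eq : (∫ y in Ioi (0:ℝ), phiAC gDE' gDE' y ^ 2) = 1 / 4 := by
  have e : ∀ y ∈ Ioi (0:ℝ), phiAC gDE' gDE' y ^ 2
      = (1 * y ^ 2 + (-2) * y + 1) * Real.exp (-(2 * y)) := by
    intro y hy
    rw [phi_g'g' (hy : (0:ℝ) < y), mul_pow, exp_neg_sq]; ring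
  rw [setIntegral_congr_fun measurableSet_Ioi e, int_quad_exp]
  norm_num

/-- For the double exponential weight function `g(x) = e^{-|x|}`:
`ψ₂ = 1`, `Φ₂₂ = 5/4`, `Φ₁₂ = 1/4`, `Φ₁₁ = 1/4`, and for all `σ, Υ > 0` the asymptotic
variance `θ ↦ (4/ψ₂²)(Φ₂₂θσ⁴ + 2Φ₁₂σ²Υ/θ + Φ₁₁Υ²/θ³)` attains its minimum value
`8σ³√Υ` over `θ ∈ (0,∞)` at `θ = √Υ/σ`, the parametric efficiency bound. -/
theorem stmt11 :
    (∫ x : ℝ, gDE x ^ 2) = 1 ∧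
    (∫ y in Set.Ioi (0 : ℝ), phiAC gDE gDE y ^ 2) = 5 / 4 ∧
    (∫ y in Set.Ioi (0 : ℝ), phiAC gDE gDE y * phiAC gDE' gDE' y) = 1 / 4 ∧
    (∫ y in Set.Ioi (0 : ℝ), phiAC gDE' gDE' y ^ 2) = 1 / 4 ∧
    ∀ σ Υ : ℝ, 0 < σ → 0 < Υ →
      (4 / (∫ x : ℝ, gDE x ^ 2) ^ 2 *
          ((∫ y in Set.Ioi (0 : ℝ), phiAC gDE gDE y ^ 2) * (Real.sqrt Υ / σ) * σ ^ 4
            + 2 * (∫ y in Set.Ioi (0 : ℝ), phiAC gDE gDE y * phiAC gDE' gDE' y)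
                * σ ^ 2 * Υ / (Real.sqrt Υ / σ)
            + (∫ y in Set.Ioi (0 : ℝ), phiAC gDE' gDE' y ^ 2) * Υ ^ 2
                / (Real.sqrt Υ / σ) ^ 3)
        = 8 * σ ^ 3 * Real.sqrt Υ) ∧
      ∀ θ : ℝ, 0 < θ →
        8 * σ ^ 3 * Real.sqrt Υ ≤
          4 / (∫ x : ℝ, gDE x ^ 2) ^ 2 *
            ((∫ y in Set.Ioi (0 : ℝ), phiAC gDE gDE y ^ 2) * θ * σ ^ 4
              + 2 * (∫ y in Set.Ioi (0 : ℝ), phiAC gDE gDE y * phiAC gDE' gDE' y)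
                  * σ ^ 2 * Υ / θ
              + (∫ y in Set.Ioi (0 : ℝ), phiAC gDE' gDE' y ^ 2) * Υ ^ 2 / θ ^ 3) := by
  refine ⟨psi2_eq, Phi22_eq, Phi12_eq, Phi11_eq, ?_⟩
  intro σ Υ hσ hΥ
  obtain ⟨s, hs, rfl⟩ : ∃ s : ℝ, 0 < s ∧ s ^ 2 = Υ :=
    ⟨Real.sqrt Υ, Real.sqrt_pos.2 hΥ, Real.sq_sqrt hΥ.le⟩
  rw [psi2_eq, Phi22_eq, Phi12_eq, Phi11_eq, Real.sqrt_sq hs.le]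
  constructor
  · field_simp
    ring
  · intro θ hθ
    have key : 8 * σ ^ 3 * s * θ ^ 3 ≤ 5 * θ ^ 4 * σ ^ 4 + 2 * σ ^ 2 * s ^ 2 * θ ^ 2 + s ^ 4 := by
      nlinarith [mul_nonneg (sq_nonneg (θ * σ - s))
        (by positivity : (0:ℝ) ≤ 5 * (θ * σ) ^ 2 + 2 * (θ * σ) * s + s ^ 2)]
    have expand : 4 / (1:ℝ) ^ 2 * (5 / 4 * θ * σ ^ 4 + 2 * (1 / 4) * σ ^ 2 * s ^ 2 / θ
        + 1 / 4 * (s ^ 2) ^ 2 / θ ^ 3)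
        = (5 * θ ^ 4 * σ ^ 4 + 2 * σ ^ 2 * s ^ 2 * θ ^ 2 + s ^ 4) / θ ^ 3 := by
      field_simp
    rw [expand, le_div_iff₀ (by positivity : (0:ℝ) < θ ^ 3)]
    linarith
end
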